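/- arXiv:2507.11254 — 2 statements merged into one kernel-verified Lean document; each statement's English description precedes it below -/
import Mathlib

section
/- For each m ≥ 3, let S and S' be the caterpillars S = (x₁, x₂, …, x_m, y₁, y₂, …, y_m) and S' = (y₁, y₂, …, y_m, x₁, x₂, …, x_m) on 2m leaves. Then under the ordering σ with σ(x₁) < ⋯ < σ(x_m) < σ(y₁) < ⋯ < σ(y_m), the OLA distance satisfies d^σ_OLA(S,S') = 2, while the hybrid number h(S,S') = m. In particular d*_OLA(S,S') ≤ 2 < m = h(S,S'), so the inequality d*_OLA ≤ h can be strict with arbitrarily large gap. -/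
namespace Phylo

/-- A rooted binary tree with leaves labelled by `W`.  A rooted binary
phylogenetic tree (whose root has out-degree one) is represented by the
subtree hanging below the root's unique child; the root edge is implicit. -/
inductive PTree (W : Type) where
  | leaf (x : W)
  | node (l r : PTree W)
  deriving DecidableEq

namespace PTree

variable {W V : Type}

def leaves : PTree W → List W
  | leaf x => [x]
  | node l r => l.leaves ++ r.leaves

def map (f : W → V) : PTree W → PTree V
  | leaf x => leaf (f x)
  | node l r => node (l.map f) (r.map f)

/-- A tree is a phylogenetic tree when its leaves are bijectively labelled,
i.e. no label occurs twice. -/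
def IsPhylo (t : PTree W) : Prop := t.leaves.Nodup

def labelSet [DecidableEq W] (t : PTree W) : Finset W := t.leaves.toFinset

end PTree

open PTree

/-- An ordering on the label set of `t`: a bijection from the leaf labels
onto `{1, …, n}`. -/
def IsOrd [DecidableEq W] (t : PTree W) (σ : W → ℕ) : Prop :=
  Set.BijOn σ ↑t.labelSet (Set.Icc 1 t.leaves.length)

/-! ### Basic operations on trees with natural-number (rank) labels -/

def minLeaf : PTree ℕ → ℕ
  | .leaf x => x
  | .node l r => min (minLeaf l) (minLeaf r)

/-- Restriction of a tree to the leaves satisfying `p` (suppressing vertices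
of out-degree one); `none` if no leaf survives. -/
def restrict {W : Type} (p : W → Bool) : PTree W → Option (PTree W)
  | .leaf x => if p x then some (.leaf x) else none
  | .node l r =>
    match restrict p l, restrict p r with
    | some a, some b => some (.node a b)
    | some a, none => some a
    | none, some b => some b
    | none, none => none

/-- The sibling subtree of the leaf labelled `i` (the other child of its
parent), if the leaf occurs. -/
def sibling {W : Type} [DecidableEq W] (i : W) : PTree W → Option (PTree W)
  | .leaf _ => none
  | .node l r =>
    if l = .leaf i then some r
    else if r = .leaf i then some l
    else match sibling i l with
      | some s => some s
      | none => sibling i r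

/-- Hamming distance between two (equal-length) vectors. -/
def hamming {α : Type} [DecidableEq α] (u v : List α) : ℕ :=
  (u.zip v).countP fun p => decide (p.1 ≠ p.2)

/-! ### OLA -/

/-- The OLA label of a vertex, given as the root of its subtree (inside a tree
whose leaves are labelled by ranks):  a leaf is labelled by its rank, and the
internal vertex created when the `j`-th leaf was attached is labelled `-j`;
this creation step equals the larger of the two minimal leaf ranks below. -/
def olaLabel : PTree ℕ → ℤ
  | .leaf x => (x : ℤ)
  | .node l r => -(max (minLeaf l) (minLeaf r) : ℤ)

/-- The `i`-th coordinate (for `i ≥ 3`) of the OLA vector:  the OLA label of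
the sibling of the rank-`i` leaf in the restriction of `t` to ranks `≤ i`. -/
def olaCoord (t : PTree ℕ) (i : ℕ) : ℤ :=
  match restrict (fun x => decide (x ≤ i)) t with
  | some ti =>
    match sibling i ti with
    | some s => olaLabel s
    | none => 0
  | none => 0

/-- The OLA vector of a tree whose leaves are labelled by ranks `1, …, n`. -/
def olaVec (t : PTree ℕ) : List ℤ :=
  (List.range t.leaves.length).map fun j =>
    if j = 0 then 0 else if j = 1 then 1 else olaCoord t (j + 1)

/-- The OLA distance of `t, t'` with respect to the ordering `σ`. -/
def dOLA {W : Type} (σ : W → ℕ) (t t' : PTree W) : ℕ :=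
  hamming (olaVec (t.map σ)) (olaVec (t'.map σ))

/-- The OLA measure: minimum OLA distance over all orderings. -/
noncomputable def dOLAstar {W : Type} [DecidableEq W] (t t' : PTree W) : ℕ :=
  sInf {k | ∃ σ : W → ℕ, IsOrd t σ ∧ dOLA σ t t' = k}

end Phylo
/-! ### HOP -/

namespace Phylo
open PTree

/-- The HOP labels of the internal vertices on the path from the root of `t`
down to the leaf of rank `i` (the internal HOP label of a vertex with children
`l, r` is `max (minLeaf l) (minLeaf r)`). -/
def pathLabels (i : ℕ) : PTree ℕ → List ℕ
  | .leaf _ => []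
  | .node l r =>
    if i ∈ l.leaves then max (minLeaf l) (minLeaf r) :: pathLabels i l
    else if i ∈ r.leaves then max (minLeaf l) (minLeaf r) :: pathLabels i r
    else []

/-- The `i`-th path segment `v(P_i)` of the HOP vector of `t`:  the internal
labels strictly between the internal vertex labelled `i` and the leaf of rank
`i` (for `i = 1` the vertex labelled `1` is the root `ρ`). -/
def hopSeg (t : PTree ℕ) (i : ℕ) : List ℕ :=
  if i = 1 then 1 :: pathLabels 1 t
  else ((pathLabels i t).dropWhile fun a => decide (a ≠ i)).drop 1

/-- Length of a longest common subsequence of two lists. -/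
def lcsLen : List ℕ → List ℕ → ℕ
  | [], _ => 0
  | _ :: _, [] => 0
  | a :: u, b :: v =>
    if a = b then lcsLen u v + 1
    else max (lcsLen (a :: u) v) (lcsLen u (b :: v))
  termination_by u v => u.length + v.length
  decreasing_by all_goals (simp only [List.length_cons]; omega)

/-- The HOP similarity of `t, t'` with respect to `σ`. -/
def simHOP {W : Type} (σ : W → ℕ) (t t' : PTree W) : ℕ :=
  ∑ i ∈ Finset.range (t.leaves.length - 1),
    lcsLen (hopSeg (t.map σ) (i + 1)) (hopSeg (t'.map σ) (i + 1))

/-- The HOP distance of `t, t'` with respect to `σ`. -/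
def dHOP {W : Type} (σ : W → ℕ) (t t' : PTree W) : ℕ :=
  t.leaves.length - simHOP σ t t'

/-- The HOP measure: minimum HOP distance over all orderings. -/
noncomputable def dHOPstar {W : Type} [DecidableEq W] (t t' : PTree W) : ℕ :=
  sInf {k | ∃ σ : W → ℕ, IsOrd t σ ∧ dHOP σ t t' = k}

end Phylo
/-! ### Phylo2Vec (P2V) -/

namespace Phylo
open PTree

/-- Binary trees with rank-labelled leaves and optionally labelled internal
vertices, used to run the P2V labelling algorithm. -/
inductive LTree where
  | leaf (r : ℕ)
  | node (lbl : Option ℕ) (l r : LTree)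
  deriving DecidableEq

namespace LTree

def ofPTree : PTree ℕ → LTree
  | .leaf x => .leaf x
  | .node l r => .node none (ofPTree l) (ofPTree r)

/-- The label of the root of an `LTree` (a leaf is labelled by its rank). -/
def lbl? : LTree → Option ℕ
  | .leaf r => some r
  | .node lbl _ _ => lbl

/-- The candidate vertices for the next P2V label: unlabelled internal
vertices both of whose children are labelled, together with the larger child
label; a vertex is recorded by its position (a list of booleans). -/
def cands : LTree → List (List Bool × ℕ)
  | .leaf _ => []
  | .node lbl l r =>
    (match lbl, l.lbl?, r.lbl? with
      | none, some a, some b => [(([] : List Bool), max a b)]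
      | _, _, _ => []) ++
    (cands l).map (fun p => (false :: p.1, p.2)) ++
    (cands r).map (fun p => (true :: p.1, p.2))

/-- Set the label of the vertex at position `p` to `j`. -/
def setLbl (j : ℕ) : LTree → List Bool → LTree
  | .leaf r, _ => .leaf r
  | .node _ l r, [] => .node (some j) l r
  | .node lbl l r, false :: p => .node lbl (setLbl j l p) r
  | .node lbl l r, true :: p => .node lbl l (setLbl j r p)

/-- One step of the P2V labelling: give label `j` to the candidate vertex
whose larger child label is maximal. -/
def step (j : ℕ) (t : LTree) : LTree :=
  match List.argmax Prod.snd t.cands with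
  | some c => setLbl j t c.1
  | none => t

/-- Run `k` steps of the P2V labelling, starting with label `j`. -/
def run : ℕ → ℕ → LTree → LTree
  | 0, _, t => t
  | k + 1, j, t => run k (j + 1) (step j t)

def siblingL (i : ℕ) : LTree → Option LTree
  | .leaf _ => none
  | .node _ l r =>
    if l = .leaf i then some r
    else if r = .leaf i then some l
    else match siblingL i l with
      | some s => some s
      | none => siblingL i r

def subAtL : LTree → List Bool → Option LTree
  | t, [] => some t
  | .leaf _, _ :: _ => none
  | .node _ l _, false :: p => subAtL l p
  | .node _ _ r, true :: p => subAtL r p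

end LTree

/-- The `i`-th step P2V labelling of the restriction `T_i` of `t` to ranks
`≤ i`:  the internal vertices are labelled `i+1, …, 2i-1`. -/
def p2vLabeled (t : PTree ℕ) (i : ℕ) : Option LTree :=
  (restrict (fun x => decide (x ≤ i)) t).map fun ti =>
    LTree.run (i - 1) (i + 1) (LTree.ofPTree ti)

/-- The `i`-th coordinate (for `i ≥ 3`) of the P2V vector: the `i`-th step
P2V label of the sibling of the rank-`i` leaf in `T_i`. -/
def p2vCoord (t : PTree ℕ) (i : ℕ) : ℤ :=
  match p2vLabeled t i with
  | some lt =>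
    match LTree.siblingL i lt with
    | some s => ((LTree.lbl? s).getD 0 : ℤ)
    | none => 0
  | none => 0

/-- The P2V vector of a tree whose leaves are labelled by ranks `1, …, n`. -/
def p2vVec (t : PTree ℕ) : List ℤ :=
  (List.range t.leaves.length).map fun j =>
    if j = 0 then 0 else if j = 1 then 1 else p2vCoord t (j + 1)

/-- The P2V distance of `t, t'` with respect to `σ`. -/
def dP2V {W : Type} (σ : W → ℕ) (t t' : PTree W) : ℕ :=
  hamming (p2vVec (t.map σ)) (p2vVec (t'.map σ))

/-- The P2V measure: minimum P2V distance over all orderings. -/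
noncomputable def dP2Vstar {W : Type} [DecidableEq W] (t t' : PTree W) : ℕ :=
  sInf {k | ∃ σ : W → ℕ, IsOrd t σ ∧ dP2V σ t t' = k}

end Phylo
/-! ### Isomorphism, positions, and the rSPR distance -/

namespace Phylo
open PTree

/-- Isomorphism of rooted (leaf-labelled) binary trees: the shapes agree up
to swapping children, and corresponding leaves carry the same label. -/
inductive Iso {W : Type} : PTree W → PTree W → Prop
  | leaf (x : W) : Iso (.leaf x) (.leaf x)
  | node {a b c d : PTree W} : Iso a c → Iso b d → Iso (.node a b) (.node c d)
  | swap {a b c d : PTree W} : Iso a d → Iso b c → Iso (.node a b) (.node c d)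

/-- The subtree of `t` at position `p` (a list of booleans: `false` = left
child, `true` = right child). -/
def subAt {W : Type} : PTree W → List Bool → Option (PTree W)
  | t, [] => some t
  | .leaf _, _ :: _ => none
  | .node l _, false :: p => subAt l p
  | .node _ r, true :: p => subAt r p

/-- Replace the subtree of `t` at position `p` by `s`. -/
def replaceAt {W : Type} : PTree W → List Bool → PTree W → PTree W
  | _, [], s => s
  | .leaf x, _ :: _, _ => .leaf x
  | .node l r, false :: p, s => .node (replaceAt l p s) r
  | .node l r, true :: p, s => .node l (replaceAt r p s)

/-- The position of the leaf labelled `x` in `t`, if it occurs. -/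
def leafPos {W : Type} [DecidableEq W] (x : W) : PTree W → Option (List Bool)
  | .leaf y => if y = x then some [] else none
  | .node l r =>
    match leafPos x l with
    | some p => some (false :: p)
    | none => (leafPos x r).map (true :: ·)

/-- The position of the leaf labelled `x` (defaulting to the root). -/
def pos {W : Type} [DecidableEq W] (t : PTree W) (x : W) : List Bool :=
  (leafPos x t).getD []

/-- One-hole contexts: plugging a tree into a context reconstructs a tree.
Each frame records a sibling subtree and on which side it sits. -/
def plug {W : Type} : List (Bool × PTree W) → PTree W → PTree W
  | [], t => t
  | (false, s) :: c, t => .node (plug c t) s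
  | (true, s) :: c, t => .node s (plug c t)

/-- A single rooted subtree prune and regraft (rSPR) move: prune the subtree
`s` (whose parent is an internal vertex of `t`), suppress its parent, and
regraft `s` by subdividing an edge (possibly the root edge) of the remaining
tree. -/
def RSPRMove {W : Type} (t t' : PTree W) : Prop :=
  ∃ (c₁ : List (Bool × PTree W)) (s r : PTree W),
    (t = plug c₁ (.node s r) ∨ t = plug c₁ (.node r s)) ∧
    ∃ (c₂ : List (Bool × PTree W)) (b : PTree W),
      plug c₁ r = plug c₂ b ∧
      (t' = plug c₂ (.node s b) ∨ t' = plug c₂ (.node b s))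

/-- `Reach k t t'`: `t` can be transformed into (a tree isomorphic to) `t'`
by `k` rSPR moves. -/
inductive Reach {W : Type} : ℕ → PTree W → PTree W → Prop
  | refl {t t' : PTree W} : Iso t t' → Reach 0 t t'
  | step {k : ℕ} {t u t' : PTree W} :
      RSPRMove t u → Reach k u t' → Reach (k + 1) t t'

/-- The rSPR distance. -/
noncomputable def dRSPR {W : Type} (t t' : PTree W) : ℕ :=
  sInf {k | Reach k t t'}

end Phylo
/-! ### Agreement forests and the hybrid number -/

namespace Phylo
open PTree

/-- Longest common prefix of two positions. -/
def lcp : List Bool → List Bool → List Bool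
  | a :: u, b :: v => if a = b then a :: lcp u v else []
  | _, _ => []

variable {W : Type} [DecidableEq W]

/-- Restriction of `t` to the labels in the finite set `L`. -/
def restrictF (t : PTree W) (L : Finset W) : Option (PTree W) :=
  restrict (fun x => decide (x ∈ L)) t

/-- The vertex set (as a set of positions) of the minimal subtree `T(L)` of
`t` connecting the leaves with labels in `L`. -/
def compVerts (t : PTree W) (L : Finset W) : Set (List Bool) :=
  {p | ∃ a ∈ L, ∃ b ∈ L,
    lcp (pos t a) (pos t b) <+: p ∧ (p <+: pos t a ∨ p <+: pos t b)}

/-- The vertex set of the minimal subtree of `t` connecting the leaves with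
labels in `L` together with the root `ρ`. -/
def rhoVerts (t : PTree W) (L : Finset W) : Set (List Bool) :=
  {p | ∃ a ∈ L, p <+: pos t a}

/-- The position of the root of the minimal connecting subtree `T(L)`. -/
noncomputable def rootOf (t : PTree W) (L : Finset W) : List Bool :=
  match L.toList with
  | [] => []
  | a :: rest => rest.foldr (fun b acc => lcp (pos t b) acc) (pos t a)

/-- `Lρ` (the label set of the component containing the root `ρ`, possibly
empty) together with the nonempty label sets in `C` form an agreement forest
for `t` and `t'`. -/
def IsAgreementForest (t t' : PTree W) (Lρ : Finset W) (C : Finset (Finset W)) : Prop :=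
  -- the label sets partition the common label set
  (∀ L ∈ C, L.Nonempty) ∧
  (∀ L ∈ C, ∀ L' ∈ C, L ≠ L' → Disjoint L L') ∧
  (∀ L ∈ C, Disjoint Lρ L) ∧
  (∀ x ∈ t.labelSet, x ∈ Lρ ∨ ∃ L ∈ C, x ∈ L) ∧
  (↑Lρ ⊆ (t.labelSet : Set W)) ∧ (∀ L ∈ C, ↑L ⊆ (t.labelSet : Set W)) ∧
  -- the restrictions of t and t' to each label set are isomorphic
  (∀ L ∈ insert Lρ C,
    ∀ u, restrictF t L = some u → ∃ u', restrictF t' L = some u' ∧ Iso u u') ∧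
  -- the minimal connecting subtrees are vertex-disjoint, in t and in t'
  (∀ L ∈ C, ∀ L' ∈ C, L ≠ L' →
    (∀ p ∈ compVerts t L, p ∉ compVerts t L') ∧
    (∀ p ∈ compVerts t' L, p ∉ compVerts t' L')) ∧
  (∀ L ∈ C,
    (∀ p ∈ rhoVerts t Lρ, p ∉ compVerts t L) ∧
    (∀ p ∈ rhoVerts t' Lρ, p ∉ compVerts t' L))

/-- The ancestor relation between components of an agreement forest: the root
of `T(L)` is a (proper) ancestor of the root of `T(L')` in `t` or in `t'`. -/
def afEdge (t t' : PTree W) (C : Finset (Finset W)) (L L' : Finset W) : Prop :=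
  L ∈ C ∧ L' ∈ C ∧ L ≠ L' ∧
  ((rootOf t L <+: rootOf t L' ∧ rootOf t L ≠ rootOf t L') ∨
   (rootOf t' L <+: rootOf t' L' ∧ rootOf t' L ≠ rootOf t' L'))

/-- An acyclic agreement forest. -/
def IsAcyclicAF (t t' : PTree W) (Lρ : Finset W) (C : Finset (Finset W)) : Prop :=
  IsAgreementForest t t' Lρ C ∧
  ∀ L, ¬ Relation.TransGen (afEdge t t' C) L L

/-- The hybrid number of `t` and `t'`: the minimum number of non-root
components of an acyclic agreement forest (Baroni–Semple–Steel). -/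
noncomputable def hyb (t t' : PTree W) : ℕ :=
  sInf {k | ∃ Lρ C, IsAcyclicAF t t' Lρ C ∧ C.card = k}

/-! ### Caterpillars and cherry-picking sequences -/

/-- The caterpillar `(z₁, z₂, z₃, …)`: `z₁, z₂` form a cherry and each later
leaf is attached above the previous ones. -/
def caterpillar (z₁ z₂ : W) (zs : List W) : PTree W :=
  zs.foldl (fun t z => .node t (.leaf z)) (.node (.leaf z₁) (.leaf z₂))

/-- The cherry partner of the leaf `x` in `t`, if `x` is in a cherry. -/
def cherryPartner (x : W) (t : PTree W) : Option W :=
  match sibling x t with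
  | some (.leaf y) => some y
  | _ => none

/-- The restriction of `t` obtained by deleting the first `i` elements of the
sequence `S`. -/
def restAfter (t : PTree W) (S : List W) (i : ℕ) : Option (PTree W) :=
  restrict (fun x => decide (x ∉ S.take i)) t

/-- `S` is a cherry-picking sequence for `t`: every element except the last
is in a cherry of the restriction of `t` to the not-yet-picked leaves. -/
def IsCPS (t : PTree W) (S : List W) : Prop :=
  ∀ i, i + 1 < S.length →
    ∃ u, restAfter t S i = some u ∧
      ∀ h : i < S.length, ∃ y, cherryPartner (S.get ⟨i, h⟩) u = some y

/-- `S` is a common cherry-picking sequence for `t` and `t'` (in particular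
it enumerates the common leaf set). -/
def IsCommonCPS (t t' : PTree W) (S : List W) : Prop :=
  S.Nodup ∧ (∀ x, x ∈ S ↔ x ∈ t.leaves) ∧ IsCPS t S ∧ IsCPS t' S

/-- The weight of a common cherry-picking sequence: the number of positions
(except the last) at which the cherry partners in the two restrictions
disagree. -/
def wtCPS (t t' : PTree W) (S : List W) : ℕ :=
  (List.range (S.length - 1)).countP fun i =>
    match S[i]?, restAfter t S i, restAfter t' S i with
    | some x, some u, some u' => decide (cherryPartner x u ≠ cherryPartner x u')
    | _, _, _ => false

/-- The ordering on the leaf set induced by the sequence `S`: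
`σ (x_i) = n - i + 1` (with `i` one-based). -/
def inducedOrd (S : List W) (x : W) : ℕ :=
  S.length - S.idxOf x

end Phylo
/-! ### Phylogenetic networks, tree-child / temporal networks, display -/

namespace Phylo
open PTree

/-- A finite directed graph with a root and designated leaf vertices, used to
model rooted binary phylogenetic networks. -/
structure Network (W : Type) where
  V : Type
  [fin : Fintype V]
  [deq : DecidableEq V]
  edge : V → V → Bool
  root : V
  leafOf : W → V

attribute [instance] Network.fin Network.deq

namespace Network

variable {W : Type} [DecidableEq W]

def inDeg (N : Network W) (v : N.V) : ℕ :=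
  Fintype.card {u : N.V // N.edge u v = true}

def outDeg (N : Network W) (v : N.V) : ℕ :=
  Fintype.card {u : N.V // N.edge v u = true}

/-- The number of reticulations (in-degree-two vertices). -/
def retCount (N : Network W) : ℕ :=
  Fintype.card {v : N.V // N.inDeg v = 2}

/-- `N` is a rooted binary phylogenetic network with leaf set `A`. -/
def Wf (N : Network W) (A : Finset W) : Prop :=
  (∀ v : N.V, ¬ Relation.TransGen (fun a b : N.V => N.edge a b = true) v v) ∧
  N.inDeg N.root = 0 ∧ N.outDeg N.root = 1 ∧
  Set.InjOn N.leafOf ↑A ∧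
  (∀ x ∈ A, N.inDeg (N.leafOf x) = 1 ∧ N.outDeg (N.leafOf x) = 0) ∧
  (∀ v : N.V, N.outDeg v = 0 → ∃ x ∈ A, v = N.leafOf x) ∧
  (∀ v : N.V, v ≠ N.root → (∀ x ∈ A, v ≠ N.leafOf x) →
    (N.inDeg v = 1 ∧ N.outDeg v = 2) ∨ (N.inDeg v = 2 ∧ N.outDeg v = 1))

/-- Tree-child: every non-leaf vertex has a child of in-degree one. -/
def TreeChild (N : Network W) : Prop :=
  ∀ v : N.V, N.outDeg v ≠ 0 → ∃ u : N.V, N.edge v u = true ∧ N.inDeg u = 1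

/-- Temporal: there is a time map which is constant along reticulation edges
and strictly increasing along tree edges. -/
def Temporal (N : Network W) : Prop :=
  ∃ time : N.V → ℝ, (∀ v, 0 < time v) ∧
    ∀ u v : N.V, N.edge u v = true →
      (N.inDeg v = 2 → time u = time v) ∧ (N.inDeg v = 1 → time u < time v)

/-- A directed path in `N` from `u` to `v`, with at least one edge. -/
def GoodPath (N : Network W) (l : List N.V) (u v : N.V) : Prop :=
  2 ≤ l.length ∧ l.head? = some u ∧ l.getLast? = some v ∧
    l.Chain' (fun a b => N.edge a b = true)

/-- The interior of a path. -/
def inter {α : Type} (l : List α) : List α := (l.drop 1).dropLast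

/-- `N` displays the tree `t`: there is a subtree of `N` which is a
subdivision of `t` (including its root edge).  The vertices of `t` are given
by their positions; edge `e = none` is the root edge and `e = some (p, b)`
the edge from the vertex at `p` to its `b`-child. -/
def Displays (N : Network W) (t : PTree W) : Prop :=
  ∃ (φ : List Bool → N.V) (P : Option (List Bool × Bool) → List N.V),
    GoodPath N (P none) N.root (φ []) ∧
    (∀ p l r, subAt t p = some (.node l r) →
      GoodPath N (P (some (p, false))) (φ p) (φ (p ++ [false])) ∧
      GoodPath N (P (some (p, true))) (φ p) (φ (p ++ [true]))) ∧
    (∀ x : W, ∀ p, leafPos x t = some p → φ p = N.leafOf x) ∧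
    (∀ p q, (subAt t p).isSome → (subAt t q).isSome → φ p = φ q → p = q) ∧
    -- the paths realising distinct tree edges are internally disjoint
    (∀ e e' : Option (List Bool × Bool), e ≠ e' →
      (∀ pb, e = some pb → ∃ l r, subAt t pb.1 = some (.node l r)) →
      (∀ pb, e' = some pb → ∃ l r, subAt t pb.1 = some (.node l r)) →
      ∀ v ∈ inter (P e), v ∉ P e') ∧
    (∀ e : Option (List Bool × Bool),
      (∀ pb, e = some pb → ∃ l r, subAt t pb.1 = some (.node l r)) →
      ∀ v ∈ inter (P e), ∀ p, (subAt t p).isSome → v ≠ φ p)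

end Network

/-- The temporal tree-child hybrid number of `t` and `t'`. -/
noncomputable def hybTemporal (t t' : PTree W) [DecidableEq W] : ℕ :=
  sInf {k | ∃ N : Network W, N.Wf t.labelSet ∧ N.TreeChild ∧ N.Temporal ∧
    N.Displays t ∧ N.Displays t' ∧ N.retCount = k}

end Phylo
/-! ### Labelled decorations, pendant subtrees, and the reductions -/

namespace Phylo
open PTree

/-- Binary trees in which every vertex carries a label in `α`. -/
inductive DTree (α : Type) where
  | leaf (lbl : α)
  | node (lbl : α) (l r : DTree α)

/-- Label-preserving isomorphism of decorated trees. -/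
inductive DIso {α : Type} : DTree α → DTree α → Prop
  | leaf (x : α) : DIso (.leaf x) (.leaf x)
  | node {k : α} {a b c d : DTree α} :
      DIso a c → DIso b d → DIso (.node k a b) (.node k c d)
  | swap {k : α} {a b c d : DTree α} :
      DIso a d → DIso b c → DIso (.node k a b) (.node k c d)

/-- The HOP labelling of a (rank-labelled) tree: leaves are labelled by their
rank and an internal vertex by the larger of the minimal ranks below its two
children. -/
def hopDec : PTree ℕ → DTree ℕ
  | .leaf x => .leaf x
  | .node l r => .node (max (minLeaf l) (minLeaf r)) (hopDec l) (hopDec r)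

/-- The OLA labelling of a (rank-labelled) tree: leaves are labelled by their
rank and an internal vertex by `-j` where `j` is the step at which it was
created (the larger of the minimal ranks below its two children). -/
def olaDec : PTree ℕ → DTree ℤ
  | .leaf x => .leaf (x : ℤ)
  | .node l r => .node (-(max (minLeaf l) (minLeaf r) : ℤ)) (olaDec l) (olaDec r)

/-- The P2V labelling of the subtree at position `p` of a rank-labelled tree
`t` with `n` leaves (labels read off after the full run of the algorithm). -/
noncomputable def p2vDecAt (t : PTree ℕ) (p : List Bool) : Option (DTree ℕ) :=
  (Option.bind (p2vLabeled t t.leaves.length) (fun lt => LTree.subAtL lt p)).map toD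
where
  toD : LTree → DTree ℕ
    | .leaf r => .leaf r
    | .node lbl l r => .node (lbl.getD 0) (toD l) (toD r)

/-- The restriction of a vector to the coordinates whose (one-based) indices
lie in `R` (the coordinates associated with a set of ranks). -/
def restrictVec (v : List ℤ) (R : Finset ℕ) : List ℤ :=
  (List.range v.length).filterMap fun j =>
    if j + 1 ∈ R then v[j]? else none

variable {W : Type} [DecidableEq W]

/-- `Y` is the label set of a pendant subtree of `t`. -/
def IsPendantSet (t : PTree W) (Y : Finset W) : Prop :=
  ∃ p s, subAt t p = some s ∧ s.labelSet = Y

/-- `Y` carries a common pendant subtree of `t` and `t'`. -/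
def IsCommonPendant (t t' : PTree W) (Y : Finset W) : Prop :=
  IsPendantSet t Y ∧ IsPendantSet t' Y ∧
  ∀ u u', restrictF t Y = some u → restrictF t' Y = some u' → Iso u u'

/-- The position of the parent of the leaf labelled `x`. -/
def parentPos (t : PTree W) (x : W) : List Bool := (pos t x).dropLast

/-- `xs` is a chain of `t`. -/
def IsChain (t : PTree W) (xs : List W) : Prop :=
  3 ≤ xs.length ∧ (∀ x ∈ xs, x ∈ t.leaves) ∧ xs.Nodup ∧
  (∀ (h1 : 0 < xs.length) (h2 : 1 < xs.length),
    parentPos t (xs.get ⟨0, h1⟩) = parentPos t (xs.get ⟨1, h2⟩) ∨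
    parentPos t (xs.get ⟨1, h2⟩) = (parentPos t (xs.get ⟨0, h1⟩)).dropLast) ∧
  (∀ i (h : i + 2 < xs.length),
    parentPos t (xs.get ⟨i + 2, h⟩)
      = (parentPos t (xs.get ⟨i + 1, by omega⟩)).dropLast)

/-- A single application of the subtree reduction, replacing (in both trees)
a maximal common pendant subtree with label set `Y` (with at least two
leaves) by a single new leaf `pnew`. -/
def SubtreeReduction (t t' u u' : PTree W) (Y : Finset W) (pnew : W) : Prop :=
  IsCommonPendant t t' Y ∧ 2 ≤ Y.card ∧
  (∀ Z, IsCommonPendant t t' Z → Y ⊆ Z → Z = Y) ∧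
  pnew ∉ t.leaves ∧ pnew ∉ t'.leaves ∧
  (∃ p s, subAt t p = some s ∧ s.labelSet = Y ∧ u = replaceAt t p (.leaf pnew)) ∧
  (∃ q s', subAt t' q = some s' ∧ s'.labelSet = Y ∧ u' = replaceAt t' q (.leaf pnew))

/-- A single application of the chain reduction, replacing (in both trees) a
maximal common chain `xs` of length at least four by a common chain of length
three on the new labels `c₁, c₂, c₃`. -/
def ChainReduction (t t' u u' : PTree W) (xs : List W) (c₁ c₂ c₃ : W) : Prop :=
  4 ≤ xs.length ∧ IsChain t xs ∧ IsChain t' xs ∧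
  (∀ ys, IsChain t ys → IsChain t' ys → xs <:+: ys → ys = xs) ∧
  c₁ ∉ t.leaves ∧ c₂ ∉ t.leaves ∧ c₃ ∉ t.leaves ∧
  c₁ ≠ c₂ ∧ c₁ ≠ c₃ ∧ c₂ ≠ c₃ ∧
  (∃ u₀ u₀',
    restrict (fun x => decide (x ∉ xs.drop 3)) t = some u₀ ∧
    restrict (fun x => decide (x ∉ xs.drop 3)) t' = some u₀' ∧
    u = u₀.map (chainRen xs c₁ c₂ c₃) ∧ u' = u₀'.map (chainRen xs c₁ c₂ c₃))
where
  chainRen (xs : List W) (c₁ c₂ c₃ : W) (x : W) : W :=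
    if xs[0]? = some x then c₁ else if xs[1]? = some x then c₂
    else if xs[2]? = some x then c₃ else x

/-- The elements of `Y` occupy consecutive ranks under `σ`. -/
def ConsecRanks (σ : W → ℕ) (Y : Finset W) : Prop :=
  ∃ i, Y.image σ = Finset.Ico i (i + Y.card)

end Phylo
/-! ### Polynomial time, NP, and NP-hardness -/

namespace Phylo

/-- Decision problems over binary strings. -/
def Lang : Type := List Bool → Prop

/-- A trivial finite encoding of binary strings. -/
def boolsEnc : Computability.Encoding (List Bool) Bool :=
  ⟨id, some, fun _ => rfl⟩

/-- `f` is computable in polynomial time (by a Turing machine, in the sense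
of Mathlib's `Turing.TM2ComputableInPolyTime`). -/
def PolyTimeComputable (f : List Bool → List Bool) : Prop :=
  Nonempty (Turing.TM2ComputableInPolyTime boolsEnc.encode boolsEnc.encode f)

/-- Polynomial-time many-one reducibility. -/
def Reduces (A B : Lang) : Prop :=
  ∃ f : List Bool → List Bool, PolyTimeComputable f ∧ ∀ x, A x ↔ B (f x)

/-- Pairing of an input with a certificate. -/
def pairEnc (x c : List Bool) : List Bool :=
  (x.flatMap fun b => [true, b]) ++ false :: c

/-- `A` is in NP: membership is certified by certificates of polynomially
bounded length, checkable by a polynomial-time verifier. -/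
def InNP (A : Lang) : Prop :=
  ∃ (g : List Bool → List Bool) (q : Polynomial ℕ),
    PolyTimeComputable g ∧
    ∀ x, A x ↔ ∃ c : List Bool,
      c.length ≤ q.eval x.length ∧ g (pairEnc x c) = [true]

/-- `B` is NP-hard. -/
def NPHard (B : Lang) : Prop := ∀ A, InNP A → Reduces A B

def encNat (k : ℕ) : List Bool := List.replicate k true ++ [false]

def encTree {n : ℕ} : PTree (Fin n) → List Bool
  | .leaf x => false :: encNat x.val
  | .node l r => true :: (encTree l ++ encTree r)

open PTree in
/-- The decision version of computing the HOP measure `d*_HOP`. -/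
noncomputable def HOPLang : Lang := fun w =>
  ∃ (n : ℕ) (t t' : PTree (Fin n)) (k : ℕ),
    w = encNat n ++ encTree t ++ encTree t' ++ encNat k ∧
    t.IsPhylo ∧ t'.IsPhylo ∧ t.labelSet = t'.labelSet ∧
    dHOPstar t t' ≤ k

end Phylo
namespace Phylo
open PTree

-- AUX START
section Aux
set_option linter.unusedSectionVars false
set_option linter.unusedVariables false

open List

variable {W : Type} [DecidableEq W]

/-- one-rooted caterpillar builder -/
def cat1 (z : W) (zs : List W) : PTree W :=
  zs.foldl (fun t x => .node t (.leaf x)) (.leaf z)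

@[simp] lemma cat1_nil (z : W) : cat1 z [] = .leaf z := rfl

lemma cat1_snoc (z : W) (zs : List W) (w : W) :
    cat1 z (zs ++ [w]) = .node (cat1 z zs) (.leaf w) := by
  simp [cat1, List.foldl_append]

lemma caterpillar_eq (z₁ z₂ : W) (zs : List W) :
    caterpillar z₁ z₂ zs = cat1 z₁ (z₂ :: zs) := rfl

lemma cat1_ne_leaf (z : W) (zs : List W) (hzs : zs ≠ []) (x : W) :
    cat1 z zs ≠ .leaf x := by
  induction zs using List.reverseRecOn with
  | nil => simp at hzs
  | append_singleton zs w ih => rw [cat1_snoc]; intro h; exact nomatch h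

lemma leaves_cat1 (z : W) (zs : List W) : (cat1 z zs).leaves = z :: zs := by
  induction zs using List.reverseRecOn with
  | nil => rfl
  | append_singleton zs w ih => rw [cat1_snoc]; simp [PTree.leaves, ih]

lemma ptree_map_id (t : PTree W) : t.map (fun x => x) = t := by
  induction t with
  | leaf x => rfl
  | node l r ihl ihr => simp [PTree.map, ihl, ihr]

lemma iso_refl (t : PTree W) : Iso t t := by
  induction t with
  | leaf x => exact .leaf x
  | node l r ihl ihr => exact .node ihl ihr

lemma minLeaf_cat1 (z : ℕ) (zs : List ℕ) (h : ∀ a ∈ zs, z ≤ a) :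
    minLeaf (cat1 z zs) = z := by
  induction zs using List.reverseRecOn with
  | nil => rfl
  | append_singleton zs w ih =>
    rw [cat1_snoc]
    have hw : z ≤ w := h w (by simp)
    have := ih (fun a ha => h a (by simp [ha]))
    simp [minLeaf, this, hw, Nat.min_eq_left]

/-- restriction target -/
def ocat : List W → Option (PTree W)
  | [] => none
  | w :: ws => some (cat1 w ws)

lemma restrict_cat1 (p : W → Bool) (z : W) (zs : List W) :
    restrict p (cat1 z zs) = ocat ((z :: zs).filter p) := by
  induction zs using List.reverseRecOn with
  | nil =>
    by_cases h : p z <;> simp [restrict, ocat, h]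
  | append_singleton zs w ih =>
    rw [cat1_snoc]
    have : (z :: (zs ++ [w])).filter p = (z :: zs).filter p ++ [w].filter p := by
      rw [← List.filter_append]; rfl
    rw [this]
    by_cases hw : p w
    · rcases hf : (z :: zs).filter p with _ | ⟨a, as⟩
      · simp [restrict, ih, hf, ocat, hw]
      · simp only [restrict, ih, hf, ocat, hw, List.filter_cons, List.filter_nil]
        simp [cat1_snoc, ocat]
    · rcases hf : (z :: zs).filter p with _ | ⟨a, as⟩
      · simp [restrict, ih, hf, ocat, hw]
      · simp [restrict, ih, hf, ocat, hw]

lemma sibling_cat1_last (i z : W) (zs : List W) (h : i ∉ z :: zs) :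
    sibling i (cat1 z (zs ++ [i])) = some (cat1 z zs) := by
  rw [cat1_snoc]
  have hne : cat1 z zs ≠ PTree.leaf i := by
    rcases zs with _ | ⟨a, as⟩
    · simp only [cat1_nil]; intro hc; cases hc; simp at h
    · exact cat1_ne_leaf _ _ (by simp) _
  simp [sibling, hne]

lemma sibling_cat1_extend (i : W) (z : W) (zs ws : List W) (s : PTree W)
    (hw : i ∉ ws) (hs : sibling i (cat1 z zs) = some s) :
    sibling i (cat1 z (zs ++ ws)) = some s := by
  induction ws using List.reverseRecOn with
  | nil => simpa using hs
  | append_singleton ws w ih =>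
    have hw' : i ∉ ws := fun hh => hw (by simp [hh])
    have hwne : w ≠ i := fun hh => hw (by simp [hh])
    have ihs := ih hw'
    rw [← List.append_assoc, cat1_snoc]
    have hne : cat1 z (zs ++ ws) ≠ PTree.leaf i := by
      intro hc
      rw [hc] at ihs; simp [sibling] at ihs
    have hne2 : PTree.leaf w ≠ (PTree.leaf i : PTree W) := by
      intro hc; cases hc; exact hwne rfl
    simp [sibling, hne, hne2, ihs]

lemma sibling_cat1_head (i w : W) (hiw : i ≠ w) :
    sibling i (cat1 i [w]) = some (.leaf w) := by
  have : cat1 i [w] = .node (.leaf i) (.leaf w) := rfl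
  rw [this]; simp [sibling]

lemma leafPos_cat1_head (z : W) (zs : List W) :
    leafPos z (cat1 z zs) = some (List.replicate zs.length false) := by
  induction zs using List.reverseRecOn with
  | nil => simp [leafPos]
  | append_singleton zs w ih =>
    rw [cat1_snoc]
    simp [leafPos, ih, List.replicate_succ]

lemma leafPos_cat1_notmem (x z : W) (zs : List W) (h : x ∉ z :: zs) :
    leafPos x (cat1 z zs) = none := by
  induction zs using List.reverseRecOn with
  | nil =>
    have : z ≠ x := fun hh => h (by simp [hh])
    simp [leafPos, this]
  | append_singleton zs w ih =>
    have h1 : x ∉ z :: zs := by simp only [List.mem_cons, List.mem_append] at h ⊢; tauto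
    have h2 : w ≠ x := by intro hh; apply h; simp [hh]
    rw [cat1_snoc]
    simp [leafPos, ih h1, h2]

lemma leafPos_cat1_mem (x z : W) (zs ws : List W)
    (h1 : x ∉ z :: zs) (h2 : x ∉ ws) :
    leafPos x (cat1 z (zs ++ x :: ws)) = some (List.replicate ws.length false ++ [true]) := by
  induction ws using List.reverseRecOn with
  | nil =>
    have : zs ++ [x] = zs ++ x :: [] := rfl
    rw [← this, cat1_snoc]
    simp [leafPos, leafPos_cat1_notmem x z zs h1]
  | append_singleton ws w ih =>
    have hw' : x ∉ ws := fun hh => h2 (by simp [hh])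
    have hwne : w ≠ x := fun hh => h2 (by simp [hh])
    have : zs ++ x :: (ws ++ [w]) = (zs ++ x :: ws) ++ [w] := by simp
    rw [this, cat1_snoc]
    simp [leafPos, ih hw', hwne, List.replicate_succ]

/-! lcp and prefix toolkit -/

lemma lcp_nil_left (l : List Bool) : lcp [] l = [] := by cases l <;> rfl
lemma lcp_nil_right (l : List Bool) : lcp l [] = [] := by cases l <;> rfl

lemma lcp_cons (a : Bool) (u v : List Bool) : lcp (a :: u) (a :: v) = a :: lcp u v := by
  simp [lcp]

lemma lcp_cons_ne (a b : Bool) (u v : List Bool) (h : a ≠ b) : lcp (a :: u) (b :: v) = [] := by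
  simp [lcp, h]

lemma lcp_self (l : List Bool) : lcp l l = l := by
  induction l with
  | nil => rfl
  | cons a u ih => rw [lcp_cons, ih]

lemma lcp_rep_rep (s : ℕ) (u v : List Bool) :
    lcp (List.replicate s false ++ u) (List.replicate s false ++ v)
      = List.replicate s false ++ lcp u v := by
  induction s with
  | zero => simp
  | succ s ih => simp [List.replicate_succ, lcp_cons, ih]

lemma lcp_comm (l₁ l₂ : List Bool) : lcp l₁ l₂ = lcp l₂ l₁ := by
  induction l₁ generalizing l₂ with
  | nil => rw [lcp_nil_left, lcp_nil_right]
  | cons a u ih =>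
    cases l₂ with
    | nil => rw [lcp_nil_left, lcp_nil_right]
    | cons b v =>
      by_cases h : a = b
      · subst h; rw [lcp_cons, lcp_cons, ih]
      · rw [lcp_cons_ne _ _ _ _ h, lcp_cons_ne _ _ _ _ (Ne.symm h)]

/-- tail is `[]` or `[true]` -/
def OkTail (u : List Bool) : Prop := u = [] ∨ u = [true]

lemma lcp_rep_tail_lt (s t : ℕ) (u v : List Bool) (hu : OkTail u) (hst : s < t) :
    lcp (List.replicate s false ++ u) (List.replicate t false ++ v)
      = List.replicate s false := by
  have ht : List.replicate t false = List.replicate s false ++ List.replicate (t - s) false := by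
    rw [← List.replicate_add]; congr 1; omega
  rw [ht, List.append_assoc, lcp_rep_rep]
  rcases hu with rfl | rfl
  · simp [lcp_nil_left]
  · have h1 : List.replicate (t - s) false = false :: List.replicate (t - s - 1) false := by
      conv_lhs => rw [show t - s = (t - s - 1) + 1 by omega]
      rw [List.replicate_succ]
    rw [h1]
    simp [lcp_cons_ne]

lemma lcp_rep_mixed (s t : ℕ) (u v : List Bool) (hu : OkTail u) (hv : OkTail v)
    (hst : s ≠ t) :
    lcp (List.replicate s false ++ u) (List.replicate t false ++ v)
      = List.replicate (min s t) false := by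
  rcases Nat.lt_or_ge s t with h | h
  · rw [lcp_rep_tail_lt s t u v hu h]; congr 1; omega
  · have h2 : t < s := by omega
    rw [lcp_comm, lcp_rep_tail_lt t s v u hv h2]; congr 1; omega

lemma lcp_rep_pure (s t : ℕ) (u : List Bool) (hu : OkTail u) :
    lcp (List.replicate s false ++ u) (List.replicate t false)
      = List.replicate (min s t) false := by
  rcases Nat.lt_or_ge s t with h | h
  · have hr : (List.replicate t false : List Bool) = List.replicate t false ++ [] := by simp
    rw [hr, lcp_rep_tail_lt s t u [] hu (by omega)]
    congr 1; omega
  · have ht : List.replicate s false ++ u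
        = List.replicate t false ++ (List.replicate (s - t) false ++ u) := by
      rw [← List.append_assoc, ← List.replicate_add]; congr 2; omega
    have key : lcp (List.replicate t false ++ (List.replicate (s - t) false ++ u))
        (List.replicate t false) = List.replicate t false := by
      have := lcp_rep_rep t (List.replicate (s - t) false ++ u) []
      simpa [lcp_nil_right] using this
    rw [ht, key]
    congr 1; omega

lemma rep_prefix (a b : ℕ) (h : a ≤ b) (v : List Bool) :
    List.replicate a false <+: List.replicate b false ++ v := by
  refine ⟨List.replicate (b - a) false ++ v, ?_⟩
  rw [← List.append_assoc, ← List.replicate_add]; congr 2; omega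

lemma prefix_getElem? {l₁ l₂ : List Bool} (h : l₁ <+: l₂) (i : ℕ) (x : Bool)
    (hx : l₁[i]? = some x) : l₂[i]? = some x := by
  obtain ⟨t, rfl⟩ := h
  have hi : i < l₁.length := by
    by_contra hc
    rw [List.getElem?_eq_none (by omega)] at hx; exact nomatch hx
  rw [List.getElem?_append_left hi]; exact hx

lemma getElem?_rep_append (b : ℕ) (v : List Bool) (a : ℕ) (h : a < b) :
    (List.replicate b false ++ v)[a]? = some false := by
  rw [List.getElem?_append_left (by simp [h]), List.getElem?_replicate]
  simp [h]

lemma getElem?_rep_true (a : ℕ) (u : List Bool) :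
    (List.replicate a false ++ true :: u)[a]? = some true := by
  rw [List.getElem?_append_right (by simp)]
  simp

lemma not_prefix_tt (a b : ℕ) (u v : List Bool) (h : a < b) :
    ¬ (List.replicate a false ++ true :: u <+: List.replicate b false ++ v) := by
  intro hp
  have := prefix_getElem? hp a true (getElem?_rep_true a u)
  rw [getElem?_rep_append b v a h] at this
  exact Bool.noConfusion (Option.some.inj this)

lemma not_prefix_ff (a b : ℕ) (u v : List Bool) (h : a < b) :
    ¬ (List.replicate b false ++ v <+: List.replicate a false ++ true :: u) := by
  intro hp
  have := prefix_getElem? hp a false (getElem?_rep_append b v a h)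
  rw [getElem?_rep_true a u] at this
  exact Bool.noConfusion (Option.some.inj this)

/-! segments of naturals -/

def seg (a n : ℕ) : List ℕ := (List.range n).map (fun k => a + k)

@[simp] lemma seg_zero (a : ℕ) : seg a 0 = [] := rfl

lemma seg_len (a n : ℕ) : (seg a n).length = n := by simp [seg]

lemma mem_seg {x a n : ℕ} : x ∈ seg a n ↔ a ≤ x ∧ x < a + n := by
  simp only [seg, List.mem_map, List.mem_range]
  constructor
  · rintro ⟨k, hk, rfl⟩; omega
  · rintro ⟨h1, h2⟩; exact ⟨x - a, by omega, by omega⟩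

lemma seg_add (a n k : ℕ) : seg a (n + k) = seg a n ++ seg (a + n) k := by
  simp only [seg, List.range_add, List.map_map, List.map_append]
  congr 1
  apply List.map_congr_left; intro x hx; simp; omega

lemma seg_snoc (a n : ℕ) : seg a (n + 1) = seg a n ++ [a + n] := by
  rw [seg_add]; rfl

lemma seg_cons (a n : ℕ) : seg a (n + 1) = a :: seg (a + 1) n := by
  have : n + 1 = 1 + n := by omega
  rw [this, seg_add]; rfl


lemma seg_eq_snoc (a n k b : ℕ) (h1 : 1 ≤ n) (h2 : k = n - 1) (h3 : b = a + n - 1) :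
    seg a n = seg a k ++ [b] := by
  subst h2
  obtain ⟨j, rfl⟩ : ∃ j, n = j + 1 := ⟨n - 1, by omega⟩
  rw [seg_snoc, show j + 1 - 1 = j by omega, show b = a + j by omega]

lemma seg_eq_cons (a n k b : ℕ) (h1 : 1 ≤ n) (h2 : k = n - 1) (h3 : b = a + 1) :
    seg a n = a :: seg b k := by
  subst h2 h3
  obtain ⟨j, rfl⟩ : ∃ j, n = j + 1 := ⟨n - 1, by omega⟩
  rw [seg_cons]
  simp

lemma nodup_seg (a n : ℕ) : (seg a n).Nodup := by
  exact List.Nodup.map (fun x y h => by omega) List.nodup_range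

lemma seg_filter_le (i a : ℕ) : ∀ n, (seg a n).filter (fun e => decide (e ≤ i))
    = seg a (min n (i + 1 - a)) := by
  intro n
  induction n with
  | zero => simp
  | succ n ih =>
    rw [seg_snoc, List.filter_append, ih]
    by_cases h : a + n ≤ i
    · have h1 : min n (i + 1 - a) = n := by omega
      have h2 : min (n + 1) (i + 1 - a) = n + 1 := by omega
      rw [h1, h2, seg_snoc]; simp [h]
    · have h1 : min n (i + 1 - a) = i + 1 - a := by omega
      have h2 : min (n + 1) (i + 1 - a) = i + 1 - a := by omega
      rw [h1, h2]; simp [h]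

/-! the two caterpillars -/

def Sc (m : ℕ) : PTree ℕ := caterpillar 1 2 ((List.range (2 * m - 2)).map (· + 3))

def Sc' (m : ℕ) : PTree ℕ :=
  caterpillar (m + 1) (m + 2)
    (((List.range (m - 2)).map (· + (m + 3))) ++ ((List.range m).map (· + 1)))

lemma map_add_eq_seg (a n : ℕ) : (List.range n).map (· + a) = seg a n := by
  apply List.map_congr_left; intro x hx; omega

lemma Sc_eq (m : ℕ) (hm : 3 ≤ m) : Sc m = cat1 1 (seg 2 (2 * m - 1)) := by
  rw [Sc, caterpillar_eq, map_add_eq_seg]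
  congr 1
  rw [show 2 * m - 1 = 1 + (2 * m - 2) by omega, seg_add]
  rfl

lemma Sc'_eq (m : ℕ) (hm : 3 ≤ m) :
    Sc' m = cat1 (m + 1) (seg (m + 2) (m - 1) ++ seg 1 m) := by
  rw [Sc', caterpillar_eq, map_add_eq_seg, map_add_eq_seg]
  congr 1
  rw [show m - 1 = 1 + (m - 2) by omega, seg_add]
  rfl

lemma Sc_list (m : ℕ) : (1 : ℕ) :: seg 2 (2 * m - 1) = seg 1 (2 * m - 1 + 1) := by
  rw [seg_cons]

lemma leaves_Sc (m : ℕ) (hm : 3 ≤ m) : (Sc m).leaves = seg 1 (2 * m) := by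
  rw [Sc_eq m hm, leaves_cat1, Sc_list, show 2 * m - 1 + 1 = 2 * m by omega]

lemma Sc'_list (m : ℕ) (hm : 3 ≤ m) :
    (m + 1) :: (seg (m + 2) (m - 1) ++ seg 1 m) = seg (m + 1) m ++ seg 1 m := by
  rw [seg_eq_cons (m+1) m (m-1) (m+2) (by omega) rfl rfl]
  simp

lemma leaves_Sc' (m : ℕ) (hm : 3 ≤ m) :
    (Sc' m).leaves = seg (m + 1) m ++ seg 1 m := by
  rw [Sc'_eq m hm, leaves_cat1, Sc'_list m hm]

lemma leaves_Sc_len (m : ℕ) (hm : 3 ≤ m) : (Sc m).leaves.length = 2 * m := by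
  rw [leaves_Sc m hm, seg_len]

lemma leaves_Sc'_len (m : ℕ) (hm : 3 ≤ m) : (Sc' m).leaves.length = 2 * m := by
  rw [leaves_Sc' m hm]; simp [seg_len]; omega

/-! restriction computations -/

lemma restrict_Sc (m : ℕ) (hm : 3 ≤ m) (p : ℕ → Bool) :
    restrict p (Sc m) = ocat ((seg 1 (2 * m)).filter p) := by
  rw [Sc_eq m hm, restrict_cat1, Sc_list, show 2 * m - 1 + 1 = 2 * m by omega]

lemma restrict_Sc' (m : ℕ) (hm : 3 ≤ m) (p : ℕ → Bool) :
    restrict p (Sc' m) = ocat ((seg (m + 1) m ++ seg 1 m).filter p) := by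
  rw [Sc'_eq m hm, restrict_cat1]
  congr 1
  exact congrArg _ (Sc'_list m hm)

/-! olaCoord of Sc -/

lemma olaLabel_cat_seg (z : ℕ) (a n : ℕ) (hz : z ≤ a) (hn : 1 ≤ n) :
    olaLabel (cat1 z (seg a n)) = -(((a + n - 1 : ℕ)) : ℤ) := by
  rw [show n = (n-1)+1 by omega, seg_snoc, cat1_snoc]
  have hmin : minLeaf (cat1 z (seg a (n-1))) = z :=
    minLeaf_cat1 _ _ (fun x hx => by rw [mem_seg] at hx; omega)
  simp only [olaLabel, hmin, minLeaf]
  congr 1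
  simp; omega

lemma olaCoord_Sc (m : ℕ) (hm : 3 ≤ m) (i : ℕ) (h3 : 3 ≤ i) (hi : i ≤ 2 * m) :
    olaCoord (Sc m) i = -((i : ℤ) - 1) := by
  have hres : restrict (fun x => decide (x ≤ i)) (Sc m)
      = some (cat1 1 (seg 2 (i - 1))) := by
    rw [restrict_Sc m hm, seg_eq_cons 1 (2*m) (2*m-1) 2 (by omega) rfl rfl]
    have : (fun x => decide (x ≤ i)) 1 = true := by simp; omega
    simp only [List.filter_cons, this, seg_filter_le, if_true]
    rw [show min (2*m-1) (i + 1 - 2) = i - 1 by omega]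
    rfl
  have hsib : sibling i (cat1 1 (seg 2 (i - 1))) = some (cat1 1 (seg 2 (i - 2))) := by
    rw [seg_eq_snoc 2 (i-1) (i-2) i (by omega) (by omega) (by omega)]
    apply sibling_cat1_last
    simp only [List.mem_cons, mem_seg]
    omega
  rw [olaCoord, hres]
  simp only [hsib]
  rw [olaLabel_cat_seg 1 2 (i-2) (by omega) (by omega)]
  congr 1
  omega

lemma olaCoord_Sc'_low (m : ℕ) (hm : 3 ≤ m) (i : ℕ) (h3 : 3 ≤ i) (hi : i ≤ m) :
    olaCoord (Sc' m) i = -((i : ℤ) - 1) := by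
  have hres : restrict (fun x => decide (x ≤ i)) (Sc' m)
      = some (cat1 1 (seg 2 (i - 1))) := by
    rw [restrict_Sc' m hm, List.filter_append, seg_filter_le, seg_filter_le]
    rw [show min m (i + 1 - (m+1)) = 0 by omega, show min m (i + 1 - 1) = i by omega]
    rw [seg_zero, List.nil_append, seg_eq_cons 1 i (i-1) 2 (by omega) rfl rfl]
    rfl
  have hsib : sibling i (cat1 1 (seg 2 (i - 1))) = some (cat1 1 (seg 2 (i - 2))) := by
    rw [seg_eq_snoc 2 (i-1) (i-2) i (by omega) (by omega) (by omega)]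
    apply sibling_cat1_last
    simp only [List.mem_cons, mem_seg]
    omega
  rw [olaCoord, hres]
  simp only [hsib]
  rw [olaLabel_cat_seg 1 2 (i-2) (by omega) (by omega)]
  congr 1
  omega

lemma olaCoord_Sc'_m1 (m : ℕ) (hm : 3 ≤ m) :
    olaCoord (Sc' m) (m + 1) = 1 := by
  have hres : restrict (fun x => decide (x ≤ m + 1)) (Sc' m)
      = some (cat1 (m+1) (seg 1 m)) := by
    rw [restrict_Sc' m hm, List.filter_append, seg_filter_le, seg_filter_le]
    rw [show min m (m + 1 + 1 - (m+1)) = 1 by omega, show min m (m + 1 + 1 - 1) = m by omega]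
    rw [show seg (m+1) 1 = [m+1] by rfl]
    rfl
  have hsib : sibling (m+1) (cat1 (m+1) (seg 1 m)) = some (.leaf 1) := by
    rw [show seg 1 m = [1] ++ seg 2 (m-1) by
      rw [seg_eq_cons 1 m (m-1) 2 (by omega) rfl rfl]; rfl]
    apply sibling_cat1_extend
    · simp only [mem_seg]; omega
    · exact sibling_cat1_head (m+1) 1 (by omega)
  rw [olaCoord, hres]
  simp only [hsib]
  rfl

lemma olaCoord_Sc'_m2 (m : ℕ) (hm : 3 ≤ m) :
    olaCoord (Sc' m) (m + 2) = (m : ℤ) + 1 := by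
  have hres : restrict (fun x => decide (x ≤ m + 2)) (Sc' m)
      = some (cat1 (m+1) ([m+2] ++ seg 1 m)) := by
    rw [restrict_Sc' m hm, List.filter_append, seg_filter_le, seg_filter_le]
    rw [show min m (m + 2 + 1 - (m+1)) = 2 by omega, show min m (m + 2 + 1 - 1) = m by omega]
    rw [show seg (m+1) 2 = [m+1, m+2] by
      rw [seg_eq_snoc (m+1) 2 1 (m+2) (by omega) rfl (by omega)]; rfl]
    rfl
  have hsib : sibling (m+2) (cat1 (m+1) ([m+2] ++ seg 1 m)) = some (.leaf (m+1)) := by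
    apply sibling_cat1_extend
    · simp only [mem_seg]; omega
    · have : sibling (m+2) (cat1 (m+1) ([] ++ [m+2])) = some (cat1 (m+1) []) := by
        apply sibling_cat1_last
        simp only [List.mem_cons, List.not_mem_nil, or_false]
        omega
      simpa using this
  rw [olaCoord, hres]
  simp only [hsib]
  simp [olaLabel]

lemma olaCoord_Sc'_high (m : ℕ) (hm : 3 ≤ m) (i : ℕ) (h3 : m + 3 ≤ i) (hi : i ≤ 2 * m) :
    olaCoord (Sc' m) i = -((i : ℤ) - 1) := by
  have hres : restrict (fun x => decide (x ≤ i)) (Sc' m)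
      = some (cat1 (m+1) ((seg (m+2) (i - m - 2) ++ [i]) ++ seg 1 m)) := by
    rw [restrict_Sc' m hm, List.filter_append, seg_filter_le, seg_filter_le]
    rw [show min m (i + 1 - (m+1)) = i - m by omega, show min m (i + 1 - 1) = m by omega]
    rw [show seg (m+1) (i - m) = (m+1) :: (seg (m+2) (i - m - 2) ++ [i]) by
      rw [seg_eq_cons (m+1) (i-m) (i-m-1) (m+2) (by omega) rfl rfl,
        seg_eq_snoc (m+2) (i-m-1) (i-m-2) i (by omega) (by omega) (by omega)]]
    rfl
  have hsib : sibling i (cat1 (m+1) ((seg (m+2) (i - m - 2) ++ [i]) ++ seg 1 m))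
      = some (cat1 (m+1) (seg (m+2) (i - m - 2))) := by
    rw [List.append_assoc, show [i] ++ seg 1 m = i :: seg 1 m by rfl]
    have base : sibling i (cat1 (m+1) (seg (m+2) (i - m - 2) ++ [i]))
        = some (cat1 (m+1) (seg (m+2) (i - m - 2))) := by
      apply sibling_cat1_last
      simp only [List.mem_cons, mem_seg]; omega
    have := sibling_cat1_extend i (m+1) (seg (m+2) (i - m - 2) ++ [i]) (seg 1 m) _
      (by simp only [mem_seg]; omega) base
    rw [List.append_assoc] at this
    simpa using this
  rw [olaCoord, hres]
  simp only [hsib]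
  rw [olaLabel_cat_seg (m+1) (m+2) (i - m - 2) (by omega) (by omega)]
  congr 1
  omega

/-! the OLA distance -/

lemma countP_two (a b : ℕ) (hab : a < b) : ∀ N,
    List.countP (fun j => decide (j = a ∨ j = b)) (List.range N)
      = (if a < N then 1 else 0) + (if b < N then 1 else 0) := by
  intro N
  induction N with
  | zero => simp
  | succ N ih =>
    rw [List.range_succ, List.countP_append, ih]
    have : List.countP (fun j => decide (j = a ∨ j = b)) [N]
        = if (N = a ∨ N = b) then 1 else 0 := by
      simp [List.countP_cons]
    rw [this]
    by_cases h1 : N = a <;> by_cases h2 : N = b <;>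
      simp [h1, h2] <;> split_ifs <;> omega

lemma dOLA_Sc (m : ℕ) (hm : 3 ≤ m) : dOLA (fun x => x) (Sc m) (Sc' m) = 2 := by
  rw [dOLA, ptree_map_id, ptree_map_id, hamming, olaVec, olaVec,
    leaves_Sc_len m hm, leaves_Sc'_len m hm, List.zip_map', List.countP_map]
  have hcong : ∀ j ∈ List.range (2 * m),
      (((fun p : ℤ × ℤ => decide (p.1 ≠ p.2)) ∘ fun j =>
        ((if j = 0 then 0 else if j = 1 then 1 else olaCoord (Sc m) (j + 1)),
         (if j = 0 then 0 else if j = 1 then 1 else olaCoord (Sc' m) (j + 1)))) j = true)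
      ↔ ((fun j => decide (j = m ∨ j = m + 1)) j = true) := by
    intro j hj
    rw [List.mem_range] at hj
    simp only [Function.comp_apply, decide_eq_true_eq]
    by_cases h0 : j = 0
    · subst h0; simp; omega
    · by_cases h1 : j = 1
      · subst h1; simp; omega
      · rw [if_neg h0, if_neg h1, if_neg h0, if_neg h1]
        rw [olaCoord_Sc m hm (j+1) (by omega) (by omega)]
        rcases Nat.lt_or_ge j m with hc | hc
        · rw [olaCoord_Sc'_low m hm (j+1) (by omega) (by omega)]
          simp; omega
        · rcases Nat.eq_or_lt_of_le hc with hc2 | hc2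
          · subst hc2
            rw [olaCoord_Sc'_m1 m hm]
            constructor
            · intro _; left; rfl
            · intro _; push_cast; omega
          · by_cases hc3 : j = m + 1
            · subst hc3
              rw [show m + 1 + 1 = m + 2 by omega, olaCoord_Sc'_m2 m hm]
              constructor
              · intro _; right; rfl
              · intro _; push_cast; omega
            · rw [olaCoord_Sc'_high m hm (j+1) (by omega) (by omega)]
              simp; omega
  rw [List.countP_congr hcong, countP_two m (m+1) (by omega) (2*m),
    if_pos (by omega), if_pos (by omega)]

lemma isOrd_Sc (m : ℕ) (hm : 3 ≤ m) : IsOrd (Sc m) (fun x => x) := by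
  have hset : ((Sc m).labelSet : Set ℕ) = Set.Icc 1 ((Sc m).leaves.length) := by
    rw [leaves_Sc_len m hm]
    ext x
    simp only [PTree.labelSet, leaves_Sc m hm, List.coe_toFinset, Set.mem_setOf_eq,
      List.mem_toFinset, mem_seg, Set.mem_Icc]
    omega
  rw [IsOrd, hset]
  exact Set.bijOn_id _

lemma dOLAstar_le (m : ℕ) (hm : 3 ≤ m) : dOLAstar (Sc m) (Sc' m) ≤ 2 :=
  Nat.sInf_le ⟨fun x => x, isOrd_Sc m hm, dOLA_Sc m hm⟩

/-! positions of leaves -/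

lemma pos_split (z : W) (zs ws : List W) (x : W) (h1 : x ∉ z :: zs) (h2 : x ∉ ws) :
    pos (cat1 z (zs ++ x :: ws)) x = List.replicate ws.length false ++ [true] := by
  rw [pos, leafPos_cat1_mem x z zs ws h1 h2, Option.getD_some]

lemma pos_head (z : W) (zs : List W) :
    pos (cat1 z zs) z = List.replicate zs.length false := by
  rw [pos, leafPos_cat1_head, Option.getD_some]

/-- spine form of a position -/
def sForm (l : List Bool) (s : ℕ) : Prop :=
  l = List.replicate s false ++ [true] ∨ l = List.replicate s false

lemma sForm_getElem_lt {l : List Bool} {s : ℕ} (h : sForm l s) (t : ℕ) (ht : t < s) :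
    l[t]? = some false := by
  rcases h with rfl | rfl
  · exact getElem?_rep_append s [true] t ht
  · rw [List.getElem?_replicate, if_pos ht]

lemma not_prefix_of_lt {l l' : List Bool} {s t : ℕ}
    (h1 : sForm l s) (h2 : sForm l' t) (hts : t < s) : ¬ l <+: l' := by
  intro hp
  have hl : l[t]? = some false := sForm_getElem_lt h1 t hts
  have := prefix_getElem? hp t false hl
  rcases h2 with rfl | rfl
  · rw [getElem?_rep_true] at this; exact Bool.noConfusion (Option.some.inj this)
  · rw [List.getElem?_replicate, if_neg (by omega)] at this
    exact nomatch this

lemma not_prefix_tail_of_lt {l l' : List Bool} {s t : ℕ}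
    (h1 : l = List.replicate s false ++ [true]) (h2 : sForm l' t) (hst : s < t) :
    ¬ l <+: l' := by
  intro hp
  have hl : l[s]? = some true := by rw [h1]; exact getElem?_rep_true s []
  have := prefix_getElem? hp s true hl
  rw [sForm_getElem_lt h2 s hst] at this
  exact Bool.noConfusion (Option.some.inj this)

lemma sForm_not_prefix {l l' : List Bool} {s t : ℕ}
    (h1 : sForm l s) (h2 : sForm l' t) (hst : s ≠ t)
    (hp : l = List.replicate s false → t < s) : ¬ l <+: l' := by
  rcases Nat.lt_or_ge t s with h | h
  · exact not_prefix_of_lt h1 h2 h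
  · have hst2 : s < t := by omega
    rcases h1 with hh | hh
    · exact not_prefix_tail_of_lt hh h2 hst2
    · exact absurd (hp hh) (by omega)

/-! positions in the two caterpillars -/


lemma seg_split_mem (a n e : ℕ) (h1 : a ≤ e) (h2 : e < a + n) :
    seg a n = seg a (e - a) ++ (e :: seg (e + 1) (a + n - e - 1)) := by
  set k := e - a with hk
  set j := a + n - e - 1 with hj
  rw [show n = k + (j + 1) by omega, seg_add]
  congr 1
  rw [show a + k = e by omega, seg_eq_cons e (j+1) j (e+1) (by omega) (by omega) rfl]

lemma pos_Sc_one (m : ℕ) (hm : 3 ≤ m) :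
    pos (Sc m) 1 = List.replicate (2 * m - 1) false := by
  rw [Sc_eq m hm, pos_head, seg_len]

lemma pos_Sc (m : ℕ) (hm : 3 ≤ m) (e : ℕ) (h1 : 2 ≤ e) (h2 : e ≤ 2 * m) :
    pos (Sc m) e = List.replicate (2 * m - e) false ++ [true] := by
  rw [Sc_eq m hm, seg_split_mem 2 (2*m-1) e (by omega) (by omega),
    pos_split 1 (seg 2 (e-2)) (seg (e+1) (2 + (2*m-1) - e - 1)) e
      (by simp only [List.mem_cons, mem_seg]; omega)
      (by simp only [mem_seg]; omega), seg_len]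
  congr 2
  omega

lemma pos_Sc_form (m : ℕ) (hm : 3 ≤ m) (e : ℕ) (h1 : 1 ≤ e) (h2 : e ≤ 2 * m) :
    sForm (pos (Sc m) e) (2 * m - e) := by
  rcases Nat.eq_or_lt_of_le h1 with h | h
  · right; rw [← h, pos_Sc_one m hm]
  · left; exact pos_Sc m hm e (by omega) h2

lemma pos_Sc'_m1 (m : ℕ) (hm : 3 ≤ m) :
    pos (Sc' m) (m+1) = List.replicate (2 * m - 1) false := by
  rw [Sc'_eq m hm, pos_head]
  simp [seg_len]
  omega

lemma pos_Sc'_x (m : ℕ) (hm : 3 ≤ m) (x : ℕ) (h1 : 1 ≤ x) (h2 : x ≤ m) :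
    pos (Sc' m) x = List.replicate (m - x) false ++ [true] := by
  have hsplit : seg (m+2) (m-1) ++ seg 1 m
      = (seg (m+2) (m-1) ++ seg 1 (x-1)) ++ (x :: seg (x+1) (1 + m - x - 1)) := by
    rw [seg_split_mem 1 m x (by omega) (by omega), List.append_assoc]
  rw [Sc'_eq m hm, hsplit,
    pos_split (m+1) (seg (m+2) (m-1) ++ seg 1 (x-1)) (seg (x+1) (1 + m - x - 1)) x
      (by simp only [List.mem_cons, List.mem_append, mem_seg]; omega)
      (by simp only [mem_seg]; omega), seg_len]
  congr 2
  omega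

lemma pos_Sc'_y (m : ℕ) (hm : 3 ≤ m) (y : ℕ) (h1 : m + 2 ≤ y) (h2 : y ≤ 2 * m) :
    pos (Sc' m) y = List.replicate (3 * m - y) false ++ [true] := by
  have hsplit : seg (m+2) (m-1) ++ seg 1 m
      = seg (m+2) (y - (m+2)) ++ (y :: (seg (y+1) (m + 2 + (m-1) - y - 1) ++ seg 1 m)) := by
    rw [seg_split_mem (m+2) (m-1) y (by omega) (by omega)]
    simp
  rw [Sc'_eq m hm, hsplit,
    pos_split (m+1) (seg (m+2) (y - (m+2))) (seg (y+1) (m + 2 + (m-1) - y - 1) ++ seg 1 m) y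
      (by simp only [List.mem_cons, mem_seg]; omega)
      (by simp only [List.mem_append, mem_seg]; omega)]
  simp [seg_len]
  congr 2
  omega

/-- the spine depth in `Sc'` -/
def sig' (m e : ℕ) : ℕ := if e ≤ m then m - e else 3 * m - e

lemma pos_Sc'_form (m : ℕ) (hm : 3 ≤ m) (e : ℕ) (h1 : 1 ≤ e) (h2 : e ≤ 2 * m) :
    sForm (pos (Sc' m) e) (sig' m e) := by
  rcases Nat.lt_or_ge m e with h | h
  · rcases Nat.eq_or_lt_of_le h with h' | h'
    · right; rw [sig', if_neg (by omega), ← h', pos_Sc'_m1 m hm]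
      congr 1; omega
    · left; rw [sig', if_neg (by omega)]; exact pos_Sc'_y m hm e (by omega) h2
  · left; rw [sig', if_pos h]; exact pos_Sc'_x m hm e h1 h

/-! label sets -/

lemma labelSet_Sc (m : ℕ) (hm : 3 ≤ m) :
    (Sc m).labelSet = Finset.Icc 1 (2 * m) := by
  ext x
  simp only [PTree.labelSet, List.mem_toFinset, leaves_Sc m hm, mem_seg, Finset.mem_Icc]
  omega

lemma nodup_Sc'_list (m : ℕ) : (seg (m+1) m ++ seg 1 m).Nodup := by
  rw [List.nodup_append]
  exact ⟨nodup_seg _ _, nodup_seg _ _,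
    fun a ha b hb => by rw [mem_seg] at ha hb; omega⟩

/-! the agreement forest for the upper bound -/

lemma filter_eq_singleton (y : ℕ) :
    ∀ (l : List ℕ), l.Nodup → y ∈ l → l.filter (fun e => decide (e = y)) = [y] := by
  intro l
  induction l with
  | nil => intro _ h; simp at h
  | cons a l ih =>
    intro hn hy
    have hn1 : a ∉ l := (List.nodup_cons.mp hn).1
    have hn2 : l.Nodup := (List.nodup_cons.mp hn).2
    by_cases hay : a = y
    · subst hay
      have : l.filter (fun e => decide (e = a)) = [] :=
        List.filter_eq_nil_iff.mpr (fun e he => by simp; rintro rfl; exact hn1 he)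
      simp [List.filter_cons, this]
    · have hyl : y ∈ l := by
        rcases List.mem_cons.mp hy with h | h
        · exact absurd h.symm hay
        · exact h
      simp only [List.filter_cons, decide_eq_true_eq, hay, if_false]
      exact ih hn2 hyl

lemma restrictF_singleton_Sc (m : ℕ) (hm : 3 ≤ m) (y : ℕ) (h1 : 1 ≤ y) (h2 : y ≤ 2*m) :
    restrictF (Sc m) ({y} : Finset ℕ) = some (PTree.leaf y) := by
  rw [restrictF, restrict_Sc m hm]
  have : (seg 1 (2*m)).filter (fun e => decide (e ∈ ({y} : Finset ℕ)))
      = (seg 1 (2*m)).filter (fun e => decide (e = y)) := by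
    apply List.filter_congr; intro e _; simp
  rw [this, filter_eq_singleton y _ (nodup_seg _ _) (by rw [mem_seg]; omega)]
  rfl

lemma restrictF_singleton_Sc' (m : ℕ) (hm : 3 ≤ m) (y : ℕ) (h1 : 1 ≤ y) (h2 : y ≤ 2*m) :
    restrictF (Sc' m) ({y} : Finset ℕ) = some (PTree.leaf y) := by
  rw [restrictF, restrict_Sc' m hm]
  have : (seg (m+1) m ++ seg 1 m).filter (fun e => decide (e ∈ ({y} : Finset ℕ)))
      = (seg (m+1) m ++ seg 1 m).filter (fun e => decide (e = y)) := by
    apply List.filter_congr; intro e _; simp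
  rw [this, filter_eq_singleton y _ (nodup_Sc'_list m)
    (by simp only [List.mem_append, mem_seg]; omega)]
  rfl

lemma restrictF_Xf_Sc (m : ℕ) (hm : 3 ≤ m) :
    restrictF (Sc m) (Finset.Icc 1 m) = some (cat1 1 (seg 2 (m-1))) := by
  rw [restrictF, restrict_Sc m hm,
    show seg 1 (2*m) = seg 1 m ++ seg (m+1) m by
      rw [show 2*m = m + m by omega, seg_add, show 1 + m = m + 1 by omega]]
  rw [List.filter_append,
    List.filter_eq_self.mpr (fun a ha => by rw [mem_seg] at ha; simp [Finset.mem_Icc]; omega),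
    List.filter_eq_nil_iff.mpr (fun a ha => by rw [mem_seg] at ha; simp [Finset.mem_Icc]; omega),
    List.append_nil, seg_eq_cons 1 m (m-1) 2 (by omega) rfl rfl]
  rfl

lemma restrictF_Xf_Sc' (m : ℕ) (hm : 3 ≤ m) :
    restrictF (Sc' m) (Finset.Icc 1 m) = some (cat1 1 (seg 2 (m-1))) := by
  rw [restrictF, restrict_Sc' m hm, List.filter_append,
    List.filter_eq_nil_iff.mpr (fun a ha => by rw [mem_seg] at ha; simp [Finset.mem_Icc]; omega),
    List.filter_eq_self.mpr (fun a ha => by rw [mem_seg] at ha; simp [Finset.mem_Icc]; omega),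
    List.nil_append, seg_eq_cons 1 m (m-1) 2 (by omega) rfl rfl]
  rfl

lemma mem_compVerts_singleton {t : PTree ℕ} {y : ℕ} {p : List Bool}
    (h : p ∈ compVerts t {y}) : pos t y <+: p ∧ p <+: pos t y := by
  obtain ⟨a, ha, b, hb, h1, h2⟩ := h
  rw [Finset.mem_singleton] at ha hb
  subst ha; subst hb
  rw [lcp_self] at h1
  exact ⟨h1, by rcases h2 with h | h <;> exact h⟩

lemma rootOf_singleton (t : PTree ℕ) (y : ℕ) : rootOf t ({y} : Finset ℕ) = pos t y := by
  rw [rootOf, Finset.toList_singleton]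
  rfl

/-- positions of distinct leaves are never prefixes of one another, in `Sc` -/
lemma pos_Sc_no_prefix (m : ℕ) (hm : 3 ≤ m) {e f : ℕ} (he : 1 ≤ e) (he2 : e ≤ 2*m)
    (hf : 1 ≤ f) (hf2 : f ≤ 2*m) (hef : e ≠ f) : ¬ pos (Sc m) e <+: pos (Sc m) f := by
  have h1 := pos_Sc_form m hm e he he2
  have h2 := pos_Sc_form m hm f hf hf2
  apply sForm_not_prefix h1 h2 (by omega)
  intro hp
  -- pure form only for e = 1
  rcases h1 with hh | hh
  · exfalso
    rw [hp] at hh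
    have := congrArg List.length hh
    simp at this
  · have : e = 1 := by
      by_contra hc
      rw [pos_Sc m hm e (by omega) he2] at hh
      have := congrArg List.length hh
      simp at this
    omega

lemma pos_Sc'_no_prefix (m : ℕ) (hm : 3 ≤ m) {e f : ℕ} (he : 1 ≤ e) (he2 : e ≤ 2*m)
    (hf : 1 ≤ f) (hf2 : f ≤ 2*m) (hef : e ≠ f) : ¬ pos (Sc' m) e <+: pos (Sc' m) f := by
  have h1 := pos_Sc'_form m hm e he he2
  have h2 := pos_Sc'_form m hm f hf hf2
  have hsig : sig' m e ≠ sig' m f := by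
    simp only [sig']; split_ifs <;> omega
  apply sForm_not_prefix h1 h2 hsig
  intro hp
  rcases h1 with hh | hh
  · exfalso
    rw [hp] at hh
    have := congrArg List.length hh
    simp at this
  · have hem : e = m + 1 := by
      by_contra hc
      rcases Nat.lt_or_ge m e with hme | hme
      · rw [pos_Sc'_y m hm e (by omega) he2] at hh
        have hlen := congrArg List.length hh
        simp only [List.length_append, List.length_replicate, List.length_cons,
          List.length_nil, sig'] at hlen
        split_ifs at hlen <;> omega
      · rw [pos_Sc'_x m hm e (by omega) hme] at hh
        have hlen := congrArg List.length hh
        simp only [List.length_append, List.length_replicate, List.length_cons,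
          List.length_nil, sig'] at hlen
        split_ifs at hlen <;> omega
    subst hem
    simp only [sig']
    split_ifs <;> omega

lemma upper_AAF (m : ℕ) (hm : 3 ≤ m) :
    IsAcyclicAF (Sc m) (Sc' m) (Finset.Icc 1 m)
      ((Finset.Icc (m+1) (2*m)).image (fun y => ({y} : Finset ℕ))) := by
  set C := (Finset.Icc (m+1) (2*m)).image (fun y => ({y} : Finset ℕ)) with hC
  have hmemC : ∀ L ∈ C, ∃ y, m + 1 ≤ y ∧ y ≤ 2*m ∧ L = {y} := by
    intro L hL
    rw [hC, Finset.mem_image] at hL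
    obtain ⟨y, hy, rfl⟩ := hL
    rw [Finset.mem_Icc] at hy
    exact ⟨y, hy.1, hy.2, rfl⟩
  constructor
  · refine ⟨?_, ?_, ?_, ?_, ?_, ?_, ?_, ?_, ?_⟩
    · intro L hL; obtain ⟨y, _, _, rfl⟩ := hmemC L hL; exact ⟨y, Finset.mem_singleton_self y⟩
    · intro L hL L' hL' hne
      obtain ⟨y, _, _, rfl⟩ := hmemC L hL
      obtain ⟨y', _, _, rfl⟩ := hmemC L' hL'
      rw [Finset.disjoint_singleton]
      intro h; exact hne (by rw [h])
    · intro L hL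
      obtain ⟨y, hy1, _, rfl⟩ := hmemC L hL
      rw [Finset.disjoint_singleton_right, Finset.mem_Icc]
      omega
    · intro x hx
      rw [labelSet_Sc m hm, Finset.mem_Icc] at hx
      by_cases hxm : x ≤ m
      · left; rw [Finset.mem_Icc]; omega
      · right
        refine ⟨{x}, ?_, Finset.mem_singleton_self x⟩
        rw [hC, Finset.mem_image]
        exact ⟨x, by rw [Finset.mem_Icc]; omega, rfl⟩
    · rw [labelSet_Sc m hm]
      intro x hx
      simp only [Finset.coe_Icc, Set.mem_Icc] at hx ⊢
      omega
    · intro L hL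
      obtain ⟨y, hy1, hy2, rfl⟩ := hmemC L hL
      rw [labelSet_Sc m hm]
      intro x hx
      simp only [Finset.coe_singleton, Set.mem_singleton_iff] at hx
      subst hx
      simp only [Finset.coe_Icc, Set.mem_Icc]
      omega
    · intro L hL u hu
      rcases Finset.mem_insert.mp hL with rfl | hL
      · rw [restrictF_Xf_Sc m hm] at hu
        refine ⟨cat1 1 (seg 2 (m-1)), restrictF_Xf_Sc' m hm, ?_⟩
        rw [← Option.some.inj hu]
        exact iso_refl _
      · obtain ⟨y, hy1, hy2, rfl⟩ := hmemC L hL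
        rw [restrictF_singleton_Sc m hm y (by omega) hy2] at hu
        refine ⟨PTree.leaf y, restrictF_singleton_Sc' m hm y (by omega) hy2, ?_⟩
        rw [← Option.some.inj hu]
        exact iso_refl _
    · intro L hL L' hL' hne
      obtain ⟨y, hy1, hy2, rfl⟩ := hmemC L hL
      obtain ⟨y', hy1', hy2', rfl⟩ := hmemC L' hL'
      have hyy : y ≠ y' := fun h => hne (by rw [h])
      constructor
      · intro p hp hp'
        obtain ⟨ha, _⟩ := mem_compVerts_singleton hp
        obtain ⟨_, hb⟩ := mem_compVerts_singleton hp'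
        exact pos_Sc_no_prefix m hm (by omega) hy2 (by omega) hy2' hyy (ha.trans hb)
      · intro p hp hp'
        obtain ⟨ha, _⟩ := mem_compVerts_singleton hp
        obtain ⟨_, hb⟩ := mem_compVerts_singleton hp'
        exact pos_Sc'_no_prefix m hm (by omega) hy2 (by omega) hy2' hyy (ha.trans hb)
    · intro L hL
      obtain ⟨y, hy1, hy2, rfl⟩ := hmemC L hL
      constructor
      · intro p hp hp'
        obtain ⟨x, hx, hpx⟩ := hp
        rw [Finset.mem_Icc] at hx
        obtain ⟨ha, _⟩ := mem_compVerts_singleton hp'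
        exact pos_Sc_no_prefix m hm (by omega) hy2 (by omega) (by omega) (by omega)
          (ha.trans hpx)
      · intro p hp hp'
        obtain ⟨x, hx, hpx⟩ := hp
        rw [Finset.mem_Icc] at hx
        obtain ⟨ha, _⟩ := mem_compVerts_singleton hp'
        exact pos_Sc'_no_prefix m hm (by omega) hy2 (by omega) (by omega) (by omega)
          (ha.trans hpx)
  · -- acyclicity: there are no edges at all
    have hnoedge : ∀ L L', ¬ afEdge (Sc m) (Sc' m) C L L' := by
      intro L L' h
      obtain ⟨hL, hL', hne, hcase⟩ := h
      obtain ⟨y, hy1, hy2, rfl⟩ := hmemC L hL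
      obtain ⟨y', hy1', hy2', rfl⟩ := hmemC L' hL'
      have hyy : y ≠ y' := fun h => hne (by rw [h])
      rcases hcase with ⟨hp, _⟩ | ⟨hp, _⟩
      · rw [rootOf_singleton, rootOf_singleton] at hp
        exact pos_Sc_no_prefix m hm (by omega) hy2 (by omega) hy2' hyy hp
      · rw [rootOf_singleton, rootOf_singleton] at hp
        exact pos_Sc'_no_prefix m hm (by omega) hy2 (by omega) hy2' hyy hp
    intro L h
    cases h with
    | single h => exact hnoedge _ _ h
    | tail _ h => exact hnoedge _ _ h

lemma hyb_le (m : ℕ) (hm : 3 ≤ m) : hyb (Sc m) (Sc' m) ≤ m := by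
  apply Nat.sInf_le
  refine ⟨Finset.Icc 1 m, (Finset.Icc (m+1) (2*m)).image (fun y => ({y} : Finset ℕ)),
    upper_AAF m hm, ?_⟩
  rw [Finset.card_image_of_injective _ (fun a b h => Finset.singleton_injective h),
    Nat.card_Icc]
  omega

/-! lower bound machinery -/

lemma sForm_exists {l : List Bool} {s : ℕ} (h : sForm l s) :
    ∃ u, OkTail u ∧ l = List.replicate s false ++ u := by
  rcases h with h | h
  · exact ⟨[true], Or.inr rfl, h⟩
  · exact ⟨[], Or.inl rfl, by simpa using h⟩

lemma lcp_sForm_mixed {l l' : List Bool} {s t : ℕ} (h1 : sForm l s) (h2 : sForm l' t)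
    (hst : s ≠ t) : lcp l l' = List.replicate (min s t) false := by
  obtain ⟨u, hu, rfl⟩ := sForm_exists h1
  obtain ⟨v, hv, rfl⟩ := sForm_exists h2
  exact lcp_rep_mixed s t u v hu hv hst

lemma lcp_sForm_pure {l : List Bool} {s : ℕ} (h1 : sForm l s) (t : ℕ) :
    lcp l (List.replicate t false) = List.replicate (min s t) false := by
  obtain ⟨u, hu, rfl⟩ := sForm_exists h1
  exact lcp_rep_pure s t u hu

lemma rep_prefix' (a b : ℕ) (h : a ≤ b) :
    (List.replicate a false : List Bool) <+: List.replicate b false := by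
  have := rep_prefix a b h []
  simpa using this

lemma rep_ne {s t : ℕ} (h : s ≠ t) :
    (List.replicate s false : List Bool) ≠ List.replicate t false := by
  intro hc
  have := congrArg List.length hc
  simp at this
  omega

lemma sForm_prefix {l : List Bool} {s c : ℕ} (h : sForm l s) (hc : c ≤ s) :
    List.replicate c false <+: l := by
  obtain ⟨u, _, rfl⟩ := sForm_exists h
  exact rep_prefix c s hc u

lemma mem_compVerts_pair {t : PTree ℕ} {L : Finset ℕ} {x y : ℕ} {sx sy c : ℕ}
    (hx : x ∈ L) (hy : y ∈ L) (hfx : sForm (pos t x) sx) (hfy : sForm (pos t y) sy)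
    (hne : sx ≠ sy) (h1 : min sx sy ≤ c) (h2 : c ≤ sx) :
    List.replicate c false ∈ compVerts t L := by
  refine ⟨x, hx, y, hy, ?_, Or.inl (sForm_prefix hfx h2)⟩
  rw [lcp_sForm_mixed hfx hfy hne]
  exact rep_prefix' _ _ h1

lemma mem_rhoVerts {t : PTree ℕ} {Lρ : Finset ℕ} {x : ℕ} {c sx : ℕ}
    (hx : x ∈ Lρ) (hfx : sForm (pos t x) sx) (h : c ≤ sx) :
    List.replicate c false ∈ rhoVerts t Lρ :=
  ⟨x, hx, sForm_prefix hfx h⟩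

lemma foldr_lcp_sForm (t : PTree ℕ) (σ : ℕ → ℕ) (lo hi : ℕ) :
    ∀ (rest : List ℕ) (a : ℕ),
      (∀ e ∈ a :: rest, sForm (pos t e) (σ e)) →
      (∀ e ∈ a :: rest, ∀ f ∈ a :: rest, σ e = σ f → e = f) →
      (a :: rest).Nodup →
      (∀ e ∈ a :: rest, lo ≤ σ e ∧ σ e ≤ hi) →
      (rest = [] ∧ rest.foldr (fun b acc => lcp (pos t b) acc) (pos t a) = pos t a)
      ∨ ∃ s, lo ≤ s ∧ s ≤ hi ∧
          rest.foldr (fun b acc => lcp (pos t b) acc) (pos t a)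
            = List.replicate s false := by
  intro rest
  induction rest with
  | nil => intro a _ _ _ _; exact Or.inl ⟨rfl, rfl⟩
  | cons b rest ih =>
    intro a hform hinj hnd hb
    right
    have hmem : ∀ e ∈ a :: rest, e ∈ a :: b :: rest := by
      intro e he
      rcases List.mem_cons.mp he with rfl | he
      · exact List.mem_cons_self
      · exact List.mem_cons_of_mem _ (List.mem_cons_of_mem _ he)
    have hnd' : (a :: rest).Nodup := by
      rw [List.nodup_cons] at hnd ⊢
      refine ⟨fun h => hnd.1 (List.mem_cons_of_mem _ h), (List.nodup_cons.mp hnd.2).2⟩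
    rcases ih a (fun e he => hform e (hmem e he)) (fun e he f hf => hinj e (hmem e he) f (hmem f hf))
        hnd' (fun e he => hb e (hmem e he)) with ⟨hr, heq⟩ | ⟨s, hs1, hs2, heq⟩
    · subst hr
      have hab : a ≠ b := by
        rw [List.nodup_cons] at hnd
        intro h; exact hnd.1 (by rw [h]; exact List.mem_cons_self)
      have hσ : σ b ≠ σ a := fun h =>
        hab (hinj a (List.mem_cons_self) b (List.mem_cons_of_mem _ (List.mem_cons_self)) h.symm)
      rw [List.foldr_cons, heq,
        lcp_sForm_mixed (hform b (List.mem_cons_of_mem _ (List.mem_cons_self)))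
          (hform a (List.mem_cons_self)) hσ]
      have hba := hb b (List.mem_cons_of_mem _ (List.mem_cons_self))
      have haa := hb a (List.mem_cons_self)
      exact ⟨min (σ b) (σ a), by omega, by omega, rfl⟩
    · rw [List.foldr_cons, heq,
        lcp_sForm_pure (hform b (List.mem_cons_of_mem _ (List.mem_cons_self))) s]
      have hba := hb b (List.mem_cons_of_mem _ (List.mem_cons_self))
      exact ⟨min (σ b) s, by omega, by omega, rfl⟩

lemma rootOf_sForm (t : PTree ℕ) (L : Finset ℕ) (σ : ℕ → ℕ) (lo hi : ℕ)
    (hL : 2 ≤ L.card)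
    (hform : ∀ e ∈ L, sForm (pos t e) (σ e))
    (hinj : ∀ e ∈ L, ∀ f ∈ L, σ e = σ f → e = f)
    (hb : ∀ e ∈ L, lo ≤ σ e ∧ σ e ≤ hi) :
    ∃ s, lo ≤ s ∧ s ≤ hi ∧ rootOf t L = List.replicate s false := by
  have hlen : 2 ≤ L.toList.length := by rw [Finset.length_toList]; exact hL
  rcases hl : L.toList with _ | ⟨a, rest⟩
  · rw [hl] at hlen; simp at hlen
  · have hmem : ∀ e ∈ a :: rest, e ∈ L := by
      intro e he; rw [← Finset.mem_toList, hl]; exact he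
    have hnd : (a :: rest).Nodup := by rw [← hl]; exact L.nodup_toList
    have hrne : rest ≠ [] := by
      intro h; rw [hl, h] at hlen; simp at hlen
    rcases foldr_lcp_sForm t σ lo hi rest a
        (fun e he => hform e (hmem e he))
        (fun e he f hf => hinj e (hmem e he) f (hmem f hf))
        hnd (fun e he => hb e (hmem e he)) with ⟨hr, _⟩ | ⟨s, hs1, hs2, heq⟩
    · exact absurd hr hrne
    · refine ⟨s, hs1, hs2, ?_⟩
      rw [rootOf, hl]
      exact heq

/-! iso inversion -/

lemma iso_leaf_inv {x y : W} (h : Iso (.leaf x : PTree W) (.leaf y)) : x = y := by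
  cases h; rfl

lemma iso_top_leaf {N N' : PTree W} {w w' : W}
    (hN : ∃ a b, N = PTree.node a b) (hN' : ∃ a b, N' = PTree.node a b)
    (h : Iso (.node N (.leaf w)) (.node N' (.leaf w'))) : w = w' := by
  cases h with
  | node h1 h2 => exact iso_leaf_inv h2
  | swap h1 h2 =>
    obtain ⟨a, b, rfl⟩ := hN
    exact absurd h1 (by intro hc; nomatch hc)

lemma length_filter_ge_card (L : Finset ℕ) (l : List ℕ) (hsub : ∀ e ∈ L, e ∈ l) :
    L.card ≤ (l.filter (fun e => decide (e ∈ L))).length := by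
  have h1 : L ⊆ (l.filter (fun e => decide (e ∈ L))).toFinset := by
    intro e he
    rw [List.mem_toFinset, List.mem_filter]
    exact ⟨hsub e he, by simp [he]⟩
  exact le_trans (Finset.card_le_card h1) (l.filter _).toFinset_card_le

lemma mixed_card_le (m : ℕ) (hm : 3 ≤ m) (L : Finset ℕ)
    (hsub : ∀ e ∈ L, 1 ≤ e ∧ e ≤ 2*m)
    (hx : ∃ x ∈ L, x ≤ m) (hy : ∃ y ∈ L, m+1 ≤ y)
    (hiso : ∀ u, restrictF (Sc m) L = some u →
      ∃ u', restrictF (Sc' m) L = some u' ∧ Iso u u') :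
    L.card ≤ 2 := by
  by_contra hc
  push_neg at hc
  obtain ⟨x, hxL, hxm⟩ := hx
  obtain ⟨y, hyL, hym⟩ := hy
  set p := fun e => decide (e ∈ L) with hp
  have hSsplit : seg 1 (2*m) = seg 1 m ++ seg (m+1) m := by
    rw [show 2*m = m+m by omega, seg_add, show 1+m = m+1 by omega]
  set lX := (seg 1 m).filter p with hlX
  set lY := (seg (m+1) m).filter p with hlY0
  have hlS : (seg 1 (2*m)).filter p = lX ++ lY := by
    rw [hSsplit, List.filter_append]
  have hYne : lY ≠ [] := by
    have hmem : y ∈ lY := List.mem_filter.mpr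
      ⟨mem_seg.mpr ⟨by omega, by have := hsub y hyL; omega⟩, by simp [hp, hyL]⟩
    exact List.ne_nil_of_mem hmem
  have hXne : lX ≠ [] := by
    have hmem : x ∈ lX := List.mem_filter.mpr
      ⟨mem_seg.mpr ⟨by have := hsub x hxL; omega, by omega⟩, by simp [hp, hxL]⟩
    exact List.ne_nil_of_mem hmem
  have hcard3 : 3 ≤ L.card := hc
  have hlen3 : 3 ≤ lX.length + lY.length := by
    have h := length_filter_ge_card L (seg 1 (2*m)) (fun e he => by
      rw [mem_seg]; have := hsub e he; omega)
    rw [hlS, List.length_append] at h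
    omega
  -- decompose  lX ++ lY  from the right
  set w := lY.getLast hYne with hw
  have hwY : w ∈ lY := List.getLast_mem hYne
  have hwB : m+1 ≤ w ∧ w ≤ 2*m := by
    have := (List.mem_filter.mp hwY).1
    rw [mem_seg] at this
    omega
  have hlYd : lY.dropLast ++ [w] = lY := List.dropLast_append_getLast hYne
  have hlS2 : lX ++ lY = (lX ++ lY.dropLast) ++ [w] := by
    rw [List.append_assoc, hlYd]
  obtain ⟨q, ws, hqws⟩ : ∃ q ws, lX ++ lY.dropLast = q :: ws := by
    rcases hinit : lX ++ lY.dropLast with _ | ⟨q, ws⟩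
    · exfalso
      have := congrArg List.length hlS2
      rw [hinit] at this
      simp at this
      omega
    · exact ⟨q, ws, rfl⟩
  have hwsne : ws ≠ [] := by
    intro hws
    have := congrArg List.length hlS2
    rw [hqws, hws] at this
    simp at this
    omega
  obtain ⟨ws0, v, hws0⟩ := List.eq_nil_or_concat ws |>.resolve_left hwsne
  have hresS : restrictF (Sc m) L = some (.node (cat1 q ws) (.leaf w)) := by
    rw [restrictF, restrict_Sc m hm, hlS, hlS2, hqws,
      show (q :: ws) ++ [w] = q :: (ws ++ [w]) from rfl,
      show ocat (q :: (ws ++ [w])) = some (cat1 q (ws ++ [w])) from rfl, cat1_snoc]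
  -- the S' side
  set w' := lX.getLast hXne with hw'
  have hw'X : w' ∈ lX := List.getLast_mem hXne
  have hw'B : 1 ≤ w' ∧ w' ≤ m := by
    have := (List.mem_filter.mp hw'X).1
    rw [mem_seg] at this
    omega
  have hlXd : lX.dropLast ++ [w'] = lX := List.dropLast_append_getLast hXne
  have hlS2' : lY ++ lX = (lY ++ lX.dropLast) ++ [w'] := by
    rw [List.append_assoc, hlXd]
  obtain ⟨q', ws', hqws'⟩ : ∃ q' ws', lY ++ lX.dropLast = q' :: ws' := by
    rcases hinit : lY ++ lX.dropLast with _ | ⟨q', ws'⟩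
    · exfalso
      have := congrArg List.length hlS2'
      rw [hinit] at this
      simp at this
      omega
    · exact ⟨q', ws', rfl⟩
  have hwsne' : ws' ≠ [] := by
    intro hws
    have := congrArg List.length hlS2'
    rw [hqws', hws] at this
    simp at this
    omega
  obtain ⟨ws0', v', hws0'⟩ := List.eq_nil_or_concat ws' |>.resolve_left hwsne'
  have hresS' : restrictF (Sc' m) L = some (.node (cat1 q' ws') (.leaf w')) := by
    rw [restrictF, restrict_Sc' m hm, List.filter_append, ← hlX, ← hlY0, hlS2', hqws',
      show (q' :: ws') ++ [w'] = q' :: (ws' ++ [w']) from rfl,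
      show ocat (q' :: (ws' ++ [w'])) = some (cat1 q' (ws' ++ [w'])) from rfl, cat1_snoc]
  obtain ⟨u', hu', hIso⟩ := hiso _ hresS
  rw [hresS'] at hu'
  have hu'eq := Option.some.inj hu'
  rw [← hu'eq] at hIso
  have hww : w = w' := by
    apply iso_top_leaf (N := cat1 q ws) (N' := cat1 q' ws')
    · exact ⟨cat1 q ws0, .leaf v, by rw [hws0, List.concat_eq_append, cat1_snoc]⟩
    · exact ⟨cat1 q' ws0', .leaf v', by rw [hws0', List.concat_eq_append, cat1_snoc]⟩
    · exact hIso
  omega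

/-! small cardinality helpers -/

lemma two_le_card {L : Finset ℕ} {a b : ℕ} (ha : a ∈ L) (hb : b ∈ L) (hab : a ≠ b) :
    2 ≤ L.card :=
  Finset.one_lt_card.mpr ⟨a, ha, b, hb, hab⟩

lemma three_le_card {L : Finset ℕ} {a b c : ℕ} (ha : a ∈ L) (hb : b ∈ L) (hc : c ∈ L)
    (hab : a ≠ b) (hac : a ≠ c) (hbc : b ≠ c) : 3 ≤ L.card := by
  have hsub : ({a, b, c} : Finset ℕ) ⊆ L := by
    intro e he
    simp only [Finset.mem_insert, Finset.mem_singleton] at he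
    rcases he with rfl | rfl | rfl <;> assumption
  have : ({a, b, c} : Finset ℕ).card = 3 := by
    rw [Finset.card_insert_of_notMem (by simp [hab, hac]),
      Finset.card_insert_of_notMem (by simp [hbc]), Finset.card_singleton]
  have := Finset.card_le_card hsub
  omega

lemma count_comp (C : Finset (Finset ℕ)) (Yf : Finset ℕ)
    (hsub : ∀ y ∈ Yf, ∃ L ∈ C, y ∈ L)
    (hone : ∀ L ∈ C, (Yf ∩ L).card ≤ 1) : Yf.card ≤ C.card := by
  have h1 : Yf ⊆ C.biUnion (fun L => Yf ∩ L) := by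
    intro y hy
    obtain ⟨L, hL, hyL⟩ := hsub y hy
    exact Finset.mem_biUnion.mpr ⟨L, hL, Finset.mem_inter.mpr ⟨hy, hyL⟩⟩
  calc Yf.card ≤ (C.biUnion (fun L => Yf ∩ L)).card := Finset.card_le_card h1
    _ ≤ ∑ L ∈ C, (Yf ∩ L).card := Finset.card_biUnion_le
    _ ≤ ∑ _L ∈ C, 1 := Finset.sum_le_sum hone
    _ = C.card := by simp

lemma count_comp2 (C : Finset (Finset ℕ)) (A : Finset ℕ)
    (hsub : ∀ a ∈ A, ∃ L ∈ C, a ∈ L) : A.card ≤ ∑ L ∈ C, L.card := by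
  have h1 : A ⊆ C.biUnion (fun L => L) := by
    intro a ha
    obtain ⟨L, hL, haL⟩ := hsub a ha
    exact Finset.mem_biUnion.mpr ⟨L, hL, haL⟩
  calc A.card ≤ (C.biUnion (fun L => L)).card := Finset.card_le_card h1
    _ ≤ ∑ L ∈ C, L.card := Finset.card_biUnion_le

/-! the lower bound on the hybrid number -/

lemma lower_bound (m : ℕ) (hm : 3 ≤ m) (Lρ : Finset ℕ) (C : Finset (Finset ℕ))
    (hAAF : IsAcyclicAF (Sc m) (Sc' m) Lρ C) : m ≤ C.card := by
  obtain ⟨⟨h1, h2, h3, h4, h5, h6, h7, h8, h9⟩, hacyc⟩ := hAAF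
  have hlab : ∀ e ∈ (Sc m).labelSet, 1 ≤ e ∧ e ≤ 2*m := by
    intro e he
    rw [labelSet_Sc m hm, Finset.mem_Icc] at he
    exact he
  have hboundC : ∀ L ∈ C, ∀ e ∈ L, 1 ≤ e ∧ e ≤ 2*m := by
    intro L hL e he
    exact hlab e (by exact_mod_cast h6 L hL (Finset.mem_coe.mpr he))
  have hboundR : ∀ e ∈ Lρ, 1 ≤ e ∧ e ≤ 2*m := by
    intro e he
    exact hlab e (by exact_mod_cast h5 (Finset.mem_coe.mpr he))
  have hsig'x : ∀ e, e ≤ m → sig' m e = m - e := fun e he => if_pos he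
  have hsig'y : ∀ e, m + 1 ≤ e → sig' m e = 3*m - e := fun e he => if_neg (by omega)
  -- (A) any component with both an x and a y has at most two elements
  have hA : ∀ L ∈ insert Lρ C, (∃ x ∈ L, x ≤ m) → (∃ y ∈ L, m+1 ≤ y) → L.card ≤ 2 := by
    intro L hL hx hy
    have hsubL : ∀ e ∈ L, 1 ≤ e ∧ e ≤ 2*m := by
      rcases Finset.mem_insert.mp hL with rfl | hL'
      · exact hboundR
      · exact hboundC L hL'
    exact mixed_card_le m hm L hsubL hx hy (h7 L hL)
  -- membership of `false^m` in the connected subtree of a mixed component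
  have hmixS : ∀ (L : Finset ℕ), (∀ e ∈ L, 1 ≤ e ∧ e ≤ 2*m) →
      (∃ x ∈ L, x ≤ m) → (∃ y ∈ L, m+1 ≤ y) →
      List.replicate m false ∈ compVerts (Sc m) L := by
    rintro L hb ⟨x, hx, hxm⟩ ⟨y, hy, hym⟩
    have hbx := hb x hx
    have hby := hb y hy
    exact mem_compVerts_pair hx hy (pos_Sc_form m hm x hbx.1 hbx.2)
      (pos_Sc_form m hm y hby.1 hby.2) (by omega) (by omega) (by omega)
  have hmixS' : ∀ (L : Finset ℕ), (∀ e ∈ L, 1 ≤ e ∧ e ≤ 2*m) →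
      (∃ x ∈ L, x ≤ m) → (∃ y ∈ L, m+1 ≤ y) →
      List.replicate m false ∈ compVerts (Sc' m) L := by
    rintro L hb ⟨x, hx, hxm⟩ ⟨y, hy, hym⟩
    have hbx := hb x hx
    have hby := hb y hy
    refine mem_compVerts_pair hy hx (pos_Sc'_form m hm y hby.1 hby.2)
      (pos_Sc'_form m hm x hbx.1 hbx.2) ?_ ?_ ?_
    · rw [hsig'x x hxm, hsig'y y hym]; omega
    · rw [hsig'x x hxm, hsig'y y hym]; omega
    · rw [hsig'y y hym]; omega
  -- (E) there cannot be one component with two x's and another with two y's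
  have hE : ∀ L ∈ C, ∀ L' ∈ C,
      (∃ x ∈ L, ∃ x' ∈ L, x ≠ x' ∧ x ≤ m ∧ x' ≤ m) →
      (∃ y ∈ L', ∃ y' ∈ L', y ≠ y' ∧ m+1 ≤ y ∧ m+1 ≤ y') → False := by
    rintro L hL L' hL' ⟨x, hx, x', hx', hxx, hxm, hx'm⟩ ⟨y, hy, y', hy', hyy, hym, hy'm⟩
    have hLpure : ∀ e ∈ L, e ≤ m := by
      intro e he
      by_contra hce
      push_neg at hce
      have hcard := hA L (Finset.mem_insert_of_mem hL) ⟨x, hx, hxm⟩ ⟨e, he, by omega⟩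
      have h3c : 3 ≤ L.card := three_le_card hx hx' he hxx (by omega) (by omega)
      omega
    have hL'pure : ∀ e ∈ L', m + 1 ≤ e := by
      intro e he
      by_contra hce
      push_neg at hce
      have hcard := hA L' (Finset.mem_insert_of_mem hL') ⟨e, he, by omega⟩ ⟨y, hy, hym⟩
      have h3c : 3 ≤ L'.card := three_le_card hy hy' he hyy (by omega) (by omega)
      omega
    obtain ⟨sA, hsA1, hsA2, hrA⟩ := rootOf_sForm (Sc m) L (fun e => 2*m - e) m (2*m - 1)
      (two_le_card hx hx' hxx)
      (fun e he => pos_Sc_form m hm e (hboundC L hL e he).1 (hboundC L hL e he).2)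
      (fun e he f hf h => by
        have h' : 2*m - e = 2*m - f := h
        have := hboundC L hL e he; have := hboundC L hL f hf; omega)
      (fun e he => by
        have := hboundC L hL e he; have := hLpure e he
        show m ≤ 2*m - e ∧ 2*m - e ≤ 2*m - 1
        omega)
    obtain ⟨sB, hsB1, hsB2, hrB⟩ := rootOf_sForm (Sc m) L' (fun e => 2*m - e) 0 (m - 1)
      (two_le_card hy hy' hyy)
      (fun e he => pos_Sc_form m hm e (hboundC L' hL' e he).1 (hboundC L' hL' e he).2)
      (fun e he f hf h => by
        have h' : 2*m - e = 2*m - f := h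
        have := hboundC L' hL' e he; have := hboundC L' hL' f hf; omega)
      (fun e he => by
        have := hboundC L' hL' e he; have := hL'pure e he
        show 0 ≤ 2*m - e ∧ 2*m - e ≤ m - 1
        omega)
    obtain ⟨sA', hsA'1, hsA'2, hrA'⟩ := rootOf_sForm (Sc' m) L (sig' m) 0 (m - 1)
      (two_le_card hx hx' hxx)
      (fun e he => pos_Sc'_form m hm e (hboundC L hL e he).1 (hboundC L hL e he).2)
      (fun e he f hf h => by
        have h1e := hboundC L hL e he; have h1f := hboundC L hL f hf
        rw [hsig'x e (hLpure e he), hsig'x f (hLpure f hf)] at h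
        have := hLpure e he; have := hLpure f hf; omega)
      (fun e he => by
        rw [hsig'x e (hLpure e he)]
        have := hboundC L hL e he; have := hLpure e he; omega)
    obtain ⟨sB', hsB'1, hsB'2, hrB'⟩ := rootOf_sForm (Sc' m) L' (sig' m) m (2*m - 1)
      (two_le_card hy hy' hyy)
      (fun e he => pos_Sc'_form m hm e (hboundC L' hL' e he).1 (hboundC L' hL' e he).2)
      (fun e he f hf h => by
        have h1e := hboundC L' hL' e he; have h1f := hboundC L' hL' f hf
        rw [hsig'y e (hL'pure e he), hsig'y f (hL'pure f hf)] at h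
        omega)
      (fun e he => by
        rw [hsig'y e (hL'pure e he)]
        have := hboundC L' hL' e he; have := hL'pure e he; omega)
    have hLL' : L ≠ L' := by
      intro h
      subst h
      exact absurd (hL'pure x hx) (by omega)
    have e1 : afEdge (Sc m) (Sc' m) C L' L := by
      refine ⟨hL', hL, hLL'.symm, Or.inl ⟨?_, ?_⟩⟩
      · rw [hrB, hrA]; exact rep_prefix' _ _ (by omega)
      · rw [hrB, hrA]; exact rep_ne (by omega)
    have e2 : afEdge (Sc m) (Sc' m) C L L' := by
      refine ⟨hL, hL', hLL', Or.inr ⟨?_, ?_⟩⟩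
      · rw [hrA', hrB']; exact rep_prefix' _ _ (by omega)
      · rw [hrA', hrB']; exact rep_ne (by omega)
    exact hacyc L (Relation.TransGen.head e2 (Relation.TransGen.single e1))
  -- main case analysis
  by_cases hbigX : ∃ L ∈ C, ∃ x ∈ L, ∃ x' ∈ L, x ≠ x' ∧ x ≤ m ∧ x' ≤ m
  · -- Case 1
    obtain ⟨L0, hL0, x, hx, x', hx', hxx, hxm, hx'm⟩ := hbigX
    have hL0pure : ∀ e ∈ L0, e ≤ m := by
      intro e he
      by_contra hce
      push_neg at hce
      have hcard := hA L0 (Finset.mem_insert_of_mem hL0) ⟨x, hx, hxm⟩ ⟨e, he, by omega⟩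
      have h3c : 3 ≤ L0.card := three_le_card hx hx' he hxx (by omega) (by omega)
      omega
    have hLρY : ∀ z ∈ Lρ, z ≤ m := by
      intro z hz
      by_contra hzc
      push_neg at hzc
      have hbz := hboundR z hz
      have hbx := hboundC L0 hL0 x hx
      have hbx' := hboundC L0 hL0 x' hx'
      refine (h9 L0 hL0).2 (List.replicate (min (m - x) (m - x')) false) ?_ ?_
      · refine mem_rhoVerts hz (pos_Sc'_form m hm z hbz.1 hbz.2) ?_
        rw [hsig'y z (by omega)]
        omega
      · refine mem_compVerts_pair hx hx' (pos_Sc'_form m hm x hbx.1 hbx.2)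
          (pos_Sc'_form m hm x' hbx'.1 hbx'.2) ?_ ?_ ?_ <;>
          simp only [hsig'x x hxm, hsig'x x' hx'm] <;> omega
    have honeY : ∀ L ∈ C, ((Finset.Icc (m+1) (2*m)) ∩ L).card ≤ 1 := by
      intro L hL
      rw [Finset.card_le_one]
      intro a ha b hb
      by_contra hab
      rw [Finset.mem_inter, Finset.mem_Icc] at ha hb
      exact hE L0 hL0 L hL ⟨x, hx, x', hx', hxx, hxm, hx'm⟩
        ⟨a, ha.2, b, hb.2, hab, ha.1.1, hb.1.1⟩
    have hsuby : ∀ y ∈ Finset.Icc (m+1) (2*m), ∃ L ∈ C, y ∈ L := by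
      intro y hy
      rw [Finset.mem_Icc] at hy
      have hylab : y ∈ (Sc m).labelSet := by
        rw [labelSet_Sc m hm, Finset.mem_Icc]; omega
      rcases h4 y hylab with hyρ | h
      · exact absurd (hLρY y hyρ) (by omega)
      · exact h
    have := count_comp C (Finset.Icc (m+1) (2*m)) hsuby honeY
    rw [Nat.card_Icc] at this
    omega
  · by_cases hbigY : ∃ L ∈ C, ∃ y ∈ L, ∃ y' ∈ L, y ≠ y' ∧ m+1 ≤ y ∧ m+1 ≤ y'
    · -- Case 2
      obtain ⟨L0, hL0, y, hy, y', hy', hyy, hym, hy'm⟩ := hbigY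
      have hLρX : ∀ z ∈ Lρ, m + 1 ≤ z := by
        intro z hz
        by_contra hzc
        push_neg at hzc
        have hbz := hboundR z hz
        have hby := hboundC L0 hL0 y hy
        have hby' := hboundC L0 hL0 y' hy'
        refine (h9 L0 hL0).1 (List.replicate (min (2*m - y) (2*m - y')) false) ?_ ?_
        · exact mem_rhoVerts hz (pos_Sc_form m hm z hbz.1 hbz.2) (by omega)
        · exact mem_compVerts_pair hy hy' (pos_Sc_form m hm y hby.1 hby.2)
            (pos_Sc_form m hm y' hby'.1 hby'.2) (by omega) (by omega) (by omega)
      have honeX : ∀ L ∈ C, ((Finset.Icc 1 m) ∩ L).card ≤ 1 := by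
        intro L hL
        rw [Finset.card_le_one]
        intro a ha b hb
        by_contra hab
        rw [Finset.mem_inter, Finset.mem_Icc] at ha hb
        exact hbigX ⟨L, hL, a, ha.2, b, hb.2, hab, ha.1.2, hb.1.2⟩
      have hsubx : ∀ x ∈ Finset.Icc 1 m, ∃ L ∈ C, x ∈ L := by
        intro z hz
        rw [Finset.mem_Icc] at hz
        have hzlab : z ∈ (Sc m).labelSet := by
          rw [labelSet_Sc m hm, Finset.mem_Icc]; omega
        rcases h4 z hzlab with hzρ | h
        · exact absurd (hLρX z hzρ) (by omega)
        · exact h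
      have := count_comp C (Finset.Icc 1 m) hsubx honeX
      rw [Nat.card_Icc] at this
      omega
    · -- Case 3
      have hlabcard : (Sc m).labelSet.card = 2*m := by
        rw [labelSet_Sc m hm, Nat.card_Icc]
        omega
      have hmixed : ∀ L ∈ C, 2 ≤ L.card →
          (∃ a ∈ L, a ≤ m) ∧ (∃ b ∈ L, m + 1 ≤ b) := by
        intro L hL hL2
        obtain ⟨a, ha, b, hb, hab⟩ := Finset.one_lt_card.mp hL2
        rcases le_or_gt a m with ham | ham
        · rcases le_or_gt b m with hbm | hbm
          · exact absurd ⟨L, hL, a, ha, b, hb, hab, ham, hbm⟩ hbigX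
          · exact ⟨⟨a, ha, ham⟩, ⟨b, hb, by omega⟩⟩
        · rcases le_or_gt b m with hbm | hbm
          · exact ⟨⟨b, hb, hbm⟩, ⟨a, ha, by omega⟩⟩
          · exact absurd ⟨L, hL, a, ha, b, hb, hab, by omega, by omega⟩ hbigY
      rcases Finset.eq_empty_or_nonempty Lρ with hρ | hρ
      · -- Lρ = ∅
        have hsum : ∑ L ∈ C, L.card ≤ C.card + 1 := by
          by_cases hM : ∃ M ∈ C, 2 ≤ M.card
          · obtain ⟨M, hMC, hM2⟩ := hM
            have hMmix := hmixed M hMC hM2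
            have hother : ∀ L ∈ C.erase M, L.card ≤ 1 := by
              intro L hL'
              have hLC := Finset.mem_of_mem_erase hL'
              have hLM := Finset.ne_of_mem_erase hL'
              by_contra hc2
              push_neg at hc2
              have hLmix := hmixed L hLC hc2
              exact (h8 M hMC L hLC (fun h => hLM h.symm)).1 _
                (hmixS M (hboundC M hMC) hMmix.1 hMmix.2)
                (hmixS L (hboundC L hLC) hLmix.1 hLmix.2)
            have hMcard : M.card ≤ 2 := by
              rcases hMmix with ⟨⟨a, ha, ham⟩, ⟨b, hb, hbm⟩⟩
              exact hA M (Finset.mem_insert_of_mem hMC) ⟨a, ha, ham⟩ ⟨b, hb, hbm⟩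
            have hsplit : M.card + ∑ L ∈ C.erase M, L.card = ∑ L ∈ C, L.card :=
              Finset.add_sum_erase C (fun L => L.card) hMC
            have hsum2 : ∑ L ∈ C.erase M, L.card ≤ ∑ _L ∈ C.erase M, 1 :=
              Finset.sum_le_sum hother
            rw [Finset.sum_const, smul_eq_mul, mul_one,
              Finset.card_erase_of_mem hMC] at hsum2
            have hCpos : 1 ≤ C.card := Finset.card_pos.mpr ⟨M, hMC⟩
            omega
          · push_neg at hM
            have : ∑ L ∈ C, L.card ≤ ∑ _L ∈ C, 1 :=
              Finset.sum_le_sum (fun L hL => by have := hM L hL; omega)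
            rw [Finset.sum_const, smul_eq_mul, mul_one] at this
            omega
        have hsub : ∀ a ∈ (Sc m).labelSet, ∃ L ∈ C, a ∈ L := by
          intro a ha
          rcases h4 a ha with h | h
          · rw [hρ] at h; exact absurd h (Finset.notMem_empty a)
          · exact h
        have h2m := count_comp2 C (Sc m).labelSet hsub
        rw [hlabcard] at h2m
        omega
      · -- Lρ nonempty : no mixed components at all
        obtain ⟨z, hz⟩ := hρ
        have hnomix : ∀ L ∈ C, ¬(2 ≤ L.card) := by
          intro L hL hc2
          have hLmix := hmixed L hL hc2
          have hbz := hboundR z hz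
          rcases le_or_gt z m with hzm | hzm
          · exact (h9 L hL).1 _
              (mem_rhoVerts hz (pos_Sc_form m hm z hbz.1 hbz.2) (by omega : m ≤ 2*m - z))
              (hmixS L (hboundC L hL) hLmix.1 hLmix.2)
          · refine (h9 L hL).2 _
              (mem_rhoVerts hz (pos_Sc'_form m hm z hbz.1 hbz.2) ?_)
              (hmixS' L (hboundC L hL) hLmix.1 hLmix.2)
            rw [hsig'y z (by omega)]
            omega
        have hLρle : Lρ.card ≤ m := by
          by_cases hLX : ∃ x ∈ Lρ, x ≤ m
          · by_cases hLY : ∃ y ∈ Lρ, m+1 ≤ y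
            · have := hA Lρ (Finset.mem_insert_self _ _) hLX hLY
              omega
            · push_neg at hLY
              have hsubρ : Lρ ⊆ Finset.Icc 1 m := by
                intro e he
                rw [Finset.mem_Icc]
                have := hboundR e he
                have := hLY e he
                omega
              have := Finset.card_le_card hsubρ
              rw [Nat.card_Icc] at this
              omega
          · push_neg at hLX
            have hsubρ : Lρ ⊆ Finset.Icc (m+1) (2*m) := by
              intro e he
              rw [Finset.mem_Icc]
              have := hboundR e he
              have := hLX e he
              omega
            have := Finset.card_le_card hsubρ
            rw [Nat.card_Icc] at this
            omega
        have hsub : ∀ a ∈ (Sc m).labelSet \ Lρ, ∃ L ∈ C, a ∈ L := by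
          intro a ha
          rw [Finset.mem_sdiff] at ha
          rcases h4 a ha.1 with h | h
          · exact absurd h ha.2
          · exact h
        have hcnt := count_comp C ((Sc m).labelSet \ Lρ) hsub (fun L hL => by
          have h1' := hnomix L hL
          have := Finset.card_le_card (Finset.inter_subset_right :
            (Sc m).labelSet \ Lρ ∩ L ⊆ L)
          omega)
        have hρsub : Lρ ⊆ (Sc m).labelSet := Finset.coe_subset.mp h5
        rw [Finset.card_sdiff_of_subset hρsub, hlabcard] at hcnt
        omega

lemma hyb_eq (m : ℕ) (hm : 3 ≤ m) : hyb (Sc m) (Sc' m) = m := by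
  apply le_antisymm (hyb_le m hm)
  apply le_csInf
  · exact ⟨m, Finset.Icc 1 m, (Finset.Icc (m+1) (2*m)).image (fun y => ({y} : Finset ℕ)),
      upper_AAF m hm, by
        rw [Finset.card_image_of_injective _ (fun a b h => Finset.singleton_injective h),
          Nat.card_Icc]
        omega⟩
  · rintro k ⟨L, Cs, hk, rfl⟩
    exact lower_bound m hm L Cs hk

end Aux
-- AUX END

/-- For the caterpillars
`S = (x₁, …, x_m, y₁, …, y_m)` and `S' = (y₁, …, y_m, x₁, …, x_m)`
(with `x_i = i` and `y_j = m + j`), under the identity-type ordering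
`σ (x₁) < ⋯ < σ (x_m) < σ (y₁) < ⋯ < σ (y_m)` the OLA distance is `2`,
while the hybrid number is `m`; hence `d*_OLA (S, S') ≤ 2 < m = h (S, S')`. -/
theorem ola_lt_hybrid_caterpillars (m : ℕ) (hm : 3 ≤ m) :
    dOLA (fun x => x)
        (caterpillar 1 2 ((List.range (2 * m - 2)).map (· + 3)))
        (caterpillar (m + 1) (m + 2)
          (((List.range (m - 2)).map (· + (m + 3))) ++
            ((List.range m).map (· + 1)))) = 2 ∧
    hyb (caterpillar 1 2 ((List.range (2 * m - 2)).map (· + 3)))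
        (caterpillar (m + 1) (m + 2)
          (((List.range (m - 2)).map (· + (m + 3))) ++
            ((List.range m).map (· + 1)))) = m ∧
    dOLAstar (caterpillar 1 2 ((List.range (2 * m - 2)).map (· + 3)))
        (caterpillar (m + 1) (m + 2)
          (((List.range (m - 2)).map (· + (m + 3))) ++
            ((List.range m).map (· + 1)))) ≤ 2 ∧
    2 < m := by
  exact ⟨dOLA_Sc m hm, hyb_eq m hm, dOLAstar_le m hm, by omega⟩

end Phylo
end

section
/- Let T and T' be two rooted binary phylogenetic X-trees on the 5-leaf set X = {x₁,…,x₅}, where T is the caterpillar (x₁, x₃, x₄, x₅, x₂) and T' is the caterpillar (x₂, x₃, x₄, x₅, x₁). Then the only common cherry-picking sequences of T and T' are (x₃, x₄, x₅, x₁, x₂) and (x₃, x₄, x₅, x₂, x₁), and both have weight 3; yet for the non-CPS ordering σ with σ(x₃) < σ(x₄) < σ(x₅) < σ(x₁) < σ(x₂), one has d^σ_Θ(T,T') = 2 for each Θ ∈ {OLA, P2V, HOP}. Hence d*_Θ(T,T') < d^{CPS}_Θ(T,T') = 3. -/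
namespace Phylo
open PTree

noncomputable def dCPSOLA {W : Type} [DecidableEq W] (t t' : PTree W) : ℕ :=
  sInf {k | ∃ S, IsCommonCPS t t' S ∧ dOLA (inducedOrd S) t t' = k}

noncomputable def dCPSHOP {W : Type} [DecidableEq W] (t t' : PTree W) : ℕ :=
  sInf {k | ∃ S, IsCommonCPS t t' S ∧ dHOP (inducedOrd S) t t' = k}

noncomputable def dCPSP2V {W : Type} [DecidableEq W] (t t' : PTree W) : ℕ :=
  sInf {k | ∃ S, IsCommonCPS t t' S ∧ dP2V (inducedOrd S) t t' = k}

/-! ### Auxiliary decidability machinery for CPS -/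

def cherryOKB (t : PTree ℕ) (S : List ℕ) (i : ℕ) : Bool :=
  match S[i]?, restAfter t S i with
  | some x, some u => (cherryPartner x u).isSome
  | _, _ => false

def cpsOK (t : PTree ℕ) (S : List ℕ) : Bool :=
  (List.range (S.length - 1)).all (cherryOKB t S)

lemma isCPS_iff (t : PTree ℕ) (S : List ℕ) : IsCPS t S ↔ cpsOK t S = true := by
  unfold IsCPS cpsOK
  rw [List.all_eq_true]
  constructor
  · intro h i hi
    rw [List.mem_range] at hi
    have hlt : i + 1 < S.length := by omega
    obtain ⟨u, hu, hy⟩ := h i hlt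
    have hlt' : i < S.length := by omega
    obtain ⟨y, hy⟩ := hy hlt'
    unfold cherryOKB
    rw [List.getElem?_eq_getElem hlt', hu]
    have hg : S.get ⟨i, hlt'⟩ = S[i] := rfl
    rw [hg] at hy
    simp [hy]
  · intro h i hlt
    have hlt' : i < S.length := by omega
    have hi := h i (List.mem_range.2 (by omega))
    unfold cherryOKB at hi
    rw [List.getElem?_eq_getElem hlt'] at hi
    cases hrest : restAfter t S i with
    | none => rw [hrest] at hi; simp at hi
    | some u =>
      rw [hrest] at hi
      refine ⟨u, rfl, fun h' => ?_⟩
      obtain ⟨y, hy⟩ := Option.isSome_iff_exists.mp hi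
      exact ⟨y, by rw [List.get_eq_getElem]; exact hy⟩

lemma isCommonCPS_iff {t t' : PTree ℕ} (ht : t.leaves.Nodup) (L : List ℕ) :
    IsCommonCPS t t' L ↔
      (L ∈ t.leaves.permutations' ∧ cpsOK t L = true ∧ cpsOK t' L = true) := by
  unfold IsCommonCPS
  rw [List.mem_permutations', isCPS_iff, isCPS_iff]
  constructor
  · rintro ⟨hn, hm, h1, h2⟩
    exact ⟨(List.perm_ext_iff_of_nodup hn ht).2 hm, h1, h2⟩
  · rintro ⟨hp, h1, h2⟩
    exact ⟨hp.nodup_iff.2 ht, fun x => hp.mem_iff, h1, h2⟩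

/-- For the caterpillars `T = (x₁, x₃, x₄, x₅, x₂)` and
`T' = (x₂, x₃, x₄, x₅, x₁)` (with `x_i = i`), the only common cherry-picking
sequences are `(x₃, x₄, x₅, x₁, x₂)` and `(x₃, x₄, x₅, x₂, x₁)`, both of
weight `3`; but under the (non-CPS) ordering
`σ (x₃) < σ (x₄) < σ (x₅) < σ (x₁) < σ (x₂)` one has `d^σ_Θ (T, T') = 2` for
each `Θ ∈ {OLA, P2V, HOP}`.  Hence `d*_Θ (T, T') < d^CPS_Θ (T, T') = 3`. -/
theorem cps_ordering_not_optimal :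
    ∀ T T' : PTree ℕ, T = caterpillar 1 3 [4, 5, 2] →
      T' = caterpillar 2 3 [4, 5, 1] →
    ∀ σ : ℕ → ℕ,
      (σ = fun x => if x = 3 then 1 else if x = 4 then 2 else
        if x = 5 then 3 else if x = 1 then 4 else 5) →
      (∀ L : List ℕ, IsCommonCPS T T' L ↔
        (L = [3, 4, 5, 1, 2] ∨ L = [3, 4, 5, 2, 1])) ∧
      wtCPS T T' [3, 4, 5, 1, 2] = 3 ∧ wtCPS T T' [3, 4, 5, 2, 1] = 3 ∧
      (∀ S : List ℕ, IsCommonCPS T T' S → inducedOrd S ≠ σ) ∧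
      dOLA σ T T' = 2 ∧ dP2V σ T T' = 2 ∧ dHOP σ T T' = 2 ∧
      dCPSOLA T T' = 3 ∧ dCPSP2V T T' = 3 ∧ dCPSHOP T T' = 3 ∧
      dOLAstar T T' < dCPSOLA T T' ∧ dP2Vstar T T' < dCPSP2V T T' ∧
      dHOPstar T T' < dCPSHOP T T' := by
  intro T T' hT hT' σ hσ
  subst hT hT' hσ
  set T := caterpillar 1 3 [4, 5, 2] with hTdef
  set T' := caterpillar 2 3 [4, 5, 1] with hTdef'
  have hnd : T.leaves.Nodup := by decide
  have part1 : ∀ L : List ℕ, IsCommonCPS T T' L ↔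
      (L = [3, 4, 5, 1, 2] ∨ L = [3, 4, 5, 2, 1]) := by
    intro L
    rw [isCommonCPS_iff hnd]
    constructor
    · rintro ⟨hm, h1, h2⟩
      revert hm h1 h2
      have key : ∀ L ∈ T.leaves.permutations', cpsOK T L = true → cpsOK T' L = true →
          L = [3, 4, 5, 1, 2] ∨ L = [3, 4, 5, 2, 1] := by
        set_option maxRecDepth 40000 in decide
      exact key L
    · rintro (rfl | rfl) <;>
        exact ⟨by set_option maxRecDepth 40000 in decide, by decide, by decide⟩
  have hdOLA : dOLA (fun x => if x = 3 then 1 else if x = 4 then 2 else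
        if x = 5 then 3 else if x = 1 then 4 else 5) T T' = 2 := by decide
  have hdP2V : dP2V (fun x => if x = 3 then 1 else if x = 4 then 2 else
        if x = 5 then 3 else if x = 1 then 4 else 5) T T' = 2 := by decide
  have hdHOP : dHOP (fun x => if x = 3 then 1 else if x = 4 then 2 else
        if x = 5 then 3 else if x = 1 then 4 else 5) T T' = 2 := by
    simp [dHOP, simHOP, Finset.sum_range_succ, hopSeg, pathLabels, lcsLen,
      PTree.map, minLeaf, caterpillar, PTree.leaves, hTdef, hTdef']
  have hOLA1 : dOLA (inducedOrd [3, 4, 5, 1, 2]) T T' = 3 := by decide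
  have hOLA2 : dOLA (inducedOrd [3, 4, 5, 2, 1]) T T' = 3 := by decide
  have hP2V1 : dP2V (inducedOrd [3, 4, 5, 1, 2]) T T' = 3 := by decide
  have hP2V2 : dP2V (inducedOrd [3, 4, 5, 2, 1]) T T' = 3 := by decide
  have hHOP1 : dHOP (inducedOrd [3, 4, 5, 1, 2]) T T' = 3 := by
    simp [dHOP, simHOP, Finset.sum_range_succ, hopSeg, pathLabels, lcsLen,
      PTree.map, minLeaf, caterpillar, PTree.leaves, hTdef, hTdef', inducedOrd]
  have hHOP2 : dHOP (inducedOrd [3, 4, 5, 2, 1]) T T' = 3 := by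
    simp [dHOP, simHOP, Finset.sum_range_succ, hopSeg, pathLabels, lcsLen,
      PTree.map, minLeaf, caterpillar, PTree.leaves, hTdef, hTdef', inducedOrd]
  have hCPSOLA : dCPSOLA T T' = 3 := by
    have hset : {k | ∃ S, IsCommonCPS T T' S ∧ dOLA (inducedOrd S) T T' = k} = {3} := by
      ext k
      simp only [Set.mem_setOf_eq, Set.mem_singleton_iff]
      constructor
      · rintro ⟨S, hS, rfl⟩
        rcases (part1 S).1 hS with rfl | rfl
        · exact hOLA1
        · exact hOLA2
      · rintro rfl
        exact ⟨[3, 4, 5, 1, 2], (part1 _).2 (Or.inl rfl), hOLA1⟩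
    rw [dCPSOLA, hset, csInf_singleton]
  have hCPSP2V : dCPSP2V T T' = 3 := by
    have hset : {k | ∃ S, IsCommonCPS T T' S ∧ dP2V (inducedOrd S) T T' = k} = {3} := by
      ext k
      simp only [Set.mem_setOf_eq, Set.mem_singleton_iff]
      constructor
      · rintro ⟨S, hS, rfl⟩
        rcases (part1 S).1 hS with rfl | rfl
        · exact hP2V1
        · exact hP2V2
      · rintro rfl
        exact ⟨[3, 4, 5, 1, 2], (part1 _).2 (Or.inl rfl), hP2V1⟩
    rw [dCPSP2V, hset, csInf_singleton]
  have hCPSHOP : dCPSHOP T T' = 3 := by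
    have hset : {k | ∃ S, IsCommonCPS T T' S ∧ dHOP (inducedOrd S) T T' = k} = {3} := by
      ext k
      simp only [Set.mem_setOf_eq, Set.mem_singleton_iff]
      constructor
      · rintro ⟨S, hS, rfl⟩
        rcases (part1 S).1 hS with rfl | rfl
        · exact hHOP1
        · exact hHOP2
      · rintro rfl
        exact ⟨[3, 4, 5, 1, 2], (part1 _).2 (Or.inl rfl), hHOP1⟩
    rw [dCPSHOP, hset, csInf_singleton]
  have hord : IsOrd T (fun x => if x = 3 then 1 else if x = 4 then 2 else
        if x = 5 then 3 else if x = 1 then 4 else 5) := by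
    refine ⟨?_, ?_, ?_⟩
    · intro x hx
      have hx' : x ∈ T.labelSet := hx
      have hx'' : x ∈ T.leaves := List.mem_toFinset.mp hx'
      rw [Set.mem_Icc]
      fin_cases hx'' <;> decide
    · intro x hx y hy
      have hx' : x ∈ T.leaves := List.mem_toFinset.mp hx
      have hy' : y ∈ T.leaves := List.mem_toFinset.mp hy
      fin_cases hx' <;> fin_cases hy' <;> decide
    · intro y hy
      rw [Set.mem_Icc] at hy
      have h1 : (1 : ℕ) ≤ y := hy.1
      have h2 : y ≤ T.leaves.length := hy.2
      have h2' : y ≤ 5 := h2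
      interval_cases y
      · exact ⟨3, by decide, by decide⟩
      · exact ⟨4, by decide, by decide⟩
      · exact ⟨5, by decide, by decide⟩
      · exact ⟨1, by decide, by decide⟩
      · exact ⟨2, by decide, by decide⟩
  refine ⟨part1, by decide, by decide, ?_, hdOLA, hdP2V, hdHOP, hCPSOLA, hCPSP2V, hCPSHOP,
    ?_, ?_, ?_⟩
  · intro S hS hEq
    rcases (part1 S).1 hS with rfl | rfl
    · exact absurd (congrFun hEq 1) (by decide)
    · exact absurd (congrFun hEq 1) (by decide)
  · have h2 : dOLAstar T T' ≤ 2 := Nat.sInf_le ⟨_, hord, hdOLA⟩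
    omega
  · have h2 : dP2Vstar T T' ≤ 2 := Nat.sInf_le ⟨_, hord, hdP2V⟩
    omega
  · have h2 : dHOPstar T T' ≤ 2 := Nat.sInf_le ⟨_, hord, hdHOP⟩
    omega

end Phylo
end
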